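/- arXiv:2101.03119 — 7 statements merged into one kernel-verified Lean document; each statement's English description precedes it below -/
import Mathlib

section
/- The maps s_β and s_k satisfy the braid relation: s_β ∘ s_k ∘ s_β = s_k ∘ s_β ∘ s_k as maps on ℚ^n. -/
open Finset

/-- `stdE n m` is the standard basis vector `e_m` (1-based index `m`) of `ℚ^n`. -/
def stdE (n m : ℕ) : Fin n → ℚ := fun j => if (j : ℕ) + 1 = m then 1 else 0

/-- the simple root `α_i = e_{i+1} - e_i` (1-based, for `1 ≤ i ≤ n-1`). -/
def alphaRoot (n i : ℕ) : Fin n → ℚ := stdE n (i + 1) - stdE n i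

/-- the simple root `β = e_1 + ⋯ + e_k`. -/
def betaRoot (n k : ℕ) : Fin n → ℚ := fun j => if (j : ℕ) < k then 1 else 0

/-- the quadratic form `q(x) = Σ x_i² + ((2-k)/k²)(Σ x_i)²`. -/
def qform (n k : ℕ) (x : Fin n → ℚ) : ℚ :=
  (∑ i, (x i) ^ 2) + ((2 - (k : ℚ)) / (k : ℚ) ^ 2) * (∑ i, x i) ^ 2

/-- the inner product obtained as the polarization of `q`. -/
def ip (n k : ℕ) (x y : Fin n → ℚ) : ℚ :=
  (qform n k (x + y) - qform n k x - qform n k y) / 2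

/-- the degree `deg(x) = (x_1 + ⋯ + x_n)/k`. -/
def degv (n k : ℕ) (x : Fin n → ℚ) : ℚ := (∑ i, x i) / (k : ℚ)

/-- `r(x) = x_{k+1} + ⋯ + x_n - 2 deg(x)`. -/
def rco (n k : ℕ) (x : Fin n → ℚ) : ℚ :=
  (∑ i ∈ Finset.univ.filter (fun i : Fin n => k ≤ (i : ℕ)), x i) - 2 * degv n k x

/-- the reflection `s_β : x ↦ x + r(x)·β`. -/
def sBeta (n k : ℕ) (x : Fin n → ℚ) : Fin n → ℚ := x + rco n k x • betaRoot n k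

/-- the map swapping coordinates `a` and `b` (0-based). -/
def sSwap (n : ℕ) (a b : Fin n) (x : Fin n → ℚ) : Fin n → ℚ := x ∘ Equiv.swap a b

/-- The Weyl group: the subgroup of bijections of `ℚ^n` generated by the simple
reflections `s_1, …, s_{n-1}` (as functions: `sSwap` of adjacent coordinates,
0-based) and `s_β` (as a function: `sBeta`). -/
def weyl (n k : ℕ) : Subgroup (Equiv.Perm (Fin n → ℚ)) :=
  Subgroup.closure
    {σ | ⇑σ = sBeta n k ∨ ∃ a b : Fin n, (a : ℕ) + 1 = (b : ℕ) ∧ ⇑σ = sSwap n a b}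

/-- The set of real roots: the orbit `W·β`. -/
def realRoots (n k : ℕ) : Set (Fin n → ℚ) :=
  {x | ∃ σ ∈ weyl n k, σ (betaRoot n k) = x}

/-- `dec x`: the coordinates of `x` rearranged in weakly decreasing order. -/
def dec {n : ℕ} (x : Fin n → ℚ) : Fin n → ℚ := fun i => x (Tuple.sort x i.rev)

lemma sum_betaRoot (n k : ℕ) (hk : k ≤ n) : ∑ i : Fin n, betaRoot n k i = k := by
  unfold betaRoot
  rw [Fin.sum_univ_eq_sum_range (fun i => if i < k then (1:ℚ) else 0) n]
  rw [Finset.sum_boole]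
  have : (Finset.range n).filter (fun i => i < k) = Finset.range k := by
    ext i; simp; omega
  rw [this, Finset.card_range]

lemma T_betaRoot (n k : ℕ) :
    ∑ i ∈ Finset.univ.filter (fun i : Fin n => k ≤ (i : ℕ)), betaRoot n k i = 0 := by
  apply Finset.sum_eq_zero
  intro i hi
  simp only [mem_filter] at hi
  simp only [betaRoot, ite_eq_right_iff]
  omega

lemma rco_sBeta (n k : ℕ) (hk : 1 ≤ k) (hkn : k ≤ n) (x : Fin n → ℚ) :
    rco n k (sBeta n k x) = - rco n k x := by
  have hk0 : (k : ℚ) ≠ 0 := by positivity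
  unfold sBeta rco degv
  simp only [Pi.add_apply, Pi.smul_apply, smul_eq_mul]
  rw [Finset.sum_add_distrib, ← Finset.mul_sum, T_betaRoot,
    Finset.sum_add_distrib, ← Finset.mul_sum, sum_betaRoot n k hkn]
  field_simp
  ring

lemma rco_sSwap (n k : ℕ) (hn : 2 ≤ n) (hk : 1 ≤ k) (hkn : k ≤ n - 1) (x : Fin n → ℚ) :
    rco n k (sSwap n ⟨k - 1, by have := hkn; omega⟩ ⟨k, by have := hkn; omega⟩ x) =
      rco n k x + x ⟨k - 1, by have := hkn; omega⟩ - x ⟨k, by have := hkn; omega⟩ := by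
  set a : Fin n := ⟨k - 1, by have := hkn; omega⟩ with ha
  set b : Fin n := ⟨k, by have := hkn; omega⟩ with hbdef
  have hb : b ∈ Finset.univ.filter (fun i : Fin n => k ≤ (i : ℕ)) := by
    simp [hbdef]
  have hS : ∑ i, sSwap n a b x i = ∑ i, x i := by
    unfold sSwap; exact Equiv.sum_comp (Equiv.swap a b) x
  have hT : ∑ i ∈ Finset.univ.filter (fun i : Fin n => k ≤ (i : ℕ)), sSwap n a b x i
      = x a + ∑ i ∈ (Finset.univ.filter (fun i : Fin n => k ≤ (i : ℕ))).erase b, x i := by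
    rw [← Finset.add_sum_erase _ _ hb]
    have h1 : sSwap n a b x b = x a := by
      simp [sSwap, Equiv.swap_apply_right]
    rw [h1]
    congr 1
    apply Finset.sum_congr rfl
    intro i hi
    have hib : i ≠ b := Finset.ne_of_mem_erase hi
    have hik : k ≤ (i : ℕ) := by
      have := Finset.mem_of_mem_erase hi
      simpa using this
    have hia : i ≠ a := by
      intro h; rw [h] at hik; simp [ha] at hik; omega
    simp [sSwap, Equiv.swap_apply_of_ne_of_ne hia hib]
  have hT2 : ∑ i ∈ (Finset.univ.filter (fun i : Fin n => k ≤ (i : ℕ))).erase b, x i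
      = (∑ i ∈ Finset.univ.filter (fun i : Fin n => k ≤ (i : ℕ)), x i) - x b := by
    rw [← Finset.add_sum_erase _ _ hb]; ring
  unfold rco degv
  rw [hS, hT, hT2]
  ring

theorem sBeta_sK_braid (n k : ℕ) (hn : 2 ≤ n) (hk : 1 ≤ k) (hkn : k ≤ n - 1) :
    sBeta n k ∘ sSwap n ⟨k - 1, by omega⟩ ⟨k, by omega⟩ ∘ sBeta n k =
      sSwap n ⟨k - 1, by omega⟩ ⟨k, by omega⟩ ∘ sBeta n k ∘
        sSwap n ⟨k - 1, by omega⟩ ⟨k, by omega⟩ := by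
  have hkn' : k ≤ n := by omega
  set a : Fin n := ⟨k - 1, by omega⟩ with ha
  set b : Fin n := ⟨k, by omega⟩ with hbdef
  have hba : betaRoot n k a = 1 := by
    simp only [betaRoot, ha]
    rw [if_pos]; omega
  have hbb : betaRoot n k b = 0 := by
    simp only [betaRoot, hbdef]
    rw [if_neg]; omega
  have hab : a ≠ b := by
    intro h
    have := congrArg Fin.val h
    simp [ha, hbdef] at this; omega
  funext x
  funext j
  have hr1 : rco n k (sSwap n a b (sBeta n k x)) = x a - x b := by
    rw [rco_sSwap n k hn hk hkn, rco_sBeta n k hk hkn']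
    simp only [sBeta, Pi.add_apply, Pi.smul_apply, smul_eq_mul, ← ha, ← hbdef, hba, hbb]
    ring
  have hr2 : rco n k (sSwap n a b x) = rco n k x + x a - x b :=
    rco_sSwap n k hn hk hkn x
  simp only [Function.comp_apply, sBeta, sSwap, Pi.add_apply, Pi.smul_apply,
    smul_eq_mul, ← ha, ← hbdef] at hr1 hr2 ⊢
  rw [hr1, hr2]
  rcases eq_or_ne j a with rfl | hja
  · simp [Equiv.swap_apply_left, hba, hbb]
  · rcases eq_or_ne j b with rfl | hjb
    · simp [Equiv.swap_apply_right, hba, hbb]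
      ring
    · simp only [Equiv.swap_apply_of_ne_of_ne hja hjb]
      ring
end

section
/- Let x = (x_1,…,x_n) ∈ ℝ^n and d ∈ ℝ satisfy: d ≥ x_1 ≥ x_2 ≥ … ≥ x_n ≥ 0; x_1 + … + x_n = k·d; and Σ_{i=1}^n x_i² + (2−k)·d² > 0. Then x_{k+1} + x_{k+2} + … + x_n < 2d. -/
open Finset

theorem tail_sum_lt_two_deg (n k : ℕ) (hn : 2 ≤ n) (hk : 1 ≤ k) (hkn : k < n)
    (x : Fin n → ℝ) (d : ℝ)
    (hmono : Antitone x)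
    (hx1 : x ⟨0, by omega⟩ ≤ d)
    (hxn : 0 ≤ x ⟨n - 1, by omega⟩)
    (hsum : ∑ i, x i = (k : ℝ) * d)
    (hq : 0 < (∑ i, (x i) ^ 2) + (2 - (k : ℝ)) * d ^ 2) :
    (∑ i ∈ Finset.univ.filter (fun i : Fin n => k ≤ (i : ℕ)), x i) < 2 * d := by
  set a := x ⟨k, hkn⟩ with ha
  have hxd : ∀ i : Fin n, x i ≤ d := fun i =>
    le_trans (hmono (show (⟨0, by omega⟩ : Fin n) ≤ i from Fin.mk_le_of_le_val (Nat.zero_le _))) hx1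
  have hx0 : ∀ i : Fin n, 0 ≤ x i := fun i =>
    le_trans hxn (hmono (show i ≤ (⟨n - 1, by omega⟩ : Fin n) from
      Fin.le_def.mpr (by simp; omega)))
  have key : ∀ i : Fin n,
      x i ^ 2 ≤ (if (i : ℕ) < k then (a + d) * x i - a * d else a * x i) := by
    intro i
    by_cases hik : (i : ℕ) < k
    · simp only [hik, if_true]
      have h1 : a ≤ x i := hmono (Fin.le_def.mpr (by simp; omega))
      have h2 : x i ≤ d := hxd i
      nlinarith [mul_nonneg (sub_nonneg.mpr h2) (sub_nonneg.mpr h1)]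
    · simp only [hik, if_false]
      have h1 : x i ≤ a := hmono (Fin.le_def.mpr (by simp; omega))
      have h2 : 0 ≤ x i := hx0 i
      nlinarith
  set T := ∑ i ∈ Finset.univ.filter (fun i : Fin n => k ≤ (i : ℕ)), x i with hT
  set H := ∑ i ∈ Finset.univ.filter (fun i : Fin n => (i : ℕ) < k), x i with hH
  have hHT : H + T = (k : ℝ) * d := by
    rw [hH, hT, ← hsum,
      ← Finset.sum_filter_add_sum_filter_not univ (fun i : Fin n => (i : ℕ) < k) x]
    congr 1
    apply Finset.sum_congr _ fun _ _ => rfl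
    ext i; simp
  have hcard : (Finset.univ.filter (fun i : Fin n => (i : ℕ) < k)).card = k := by
    have : (Finset.univ.filter (fun i : Fin n => (i : ℕ) < k)) = Finset.Iio ⟨k, hkn⟩ := by
      ext i; simp [Finset.mem_Iio, Fin.lt_def]
    rw [this, Fin.card_Iio]
  have hsum2 : (∑ i, x i ^ 2) ≤ d * H := by
    calc (∑ i, x i ^ 2)
        ≤ ∑ i : Fin n, (if (i : ℕ) < k then (a + d) * x i - a * d else a * x i) :=
          Finset.sum_le_sum fun i _ => key i
      _ = (∑ i ∈ Finset.univ.filter (fun i : Fin n => (i : ℕ) < k), ((a + d) * x i - a * d))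
          + ∑ i ∈ Finset.univ.filter (fun i : Fin n => ¬ (i : ℕ) < k), a * x i :=
          Finset.sum_ite _ _
      _ = ((a + d) * H - k * (a * d)) + a * T := by
          have hset : (Finset.univ.filter (fun i : Fin n => ¬ (i : ℕ) < k))
              = Finset.univ.filter (fun i : Fin n => k ≤ (i : ℕ)) := by
            ext i; simp
          rw [hset, Finset.sum_sub_distrib, ← Finset.mul_sum, Finset.sum_const, hcard,
            ← Finset.mul_sum, nsmul_eq_mul, ← hH, ← hT]
      _ = d * H := by linear_combination a * hHT
  have hd0 : (0 : ℝ) ≤ d := le_trans (hx0 _) hx1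
  have hT0 : (0 : ℝ) ≤ T := Finset.sum_nonneg fun i _ => hx0 i
  have hk2 : ((k : ℝ) - 2) * d ^ 2 < d * H := by
    nlinarith
  nlinarith [hk2, hHT, hd0, hT0, sq_nonneg d]
end

section
/- If x = (x_1,…,x_n) is a real root (i.e. x = w(β) for some w ∈ W) with deg(x) ≥ 1 whose coordinates are weakly decreasing, x_1 ≥ x_2 ≥ … ≥ x_n, then deg(s_β(x)) < deg(x). -/
open Finset

section A
open Finset
namespace WProof

variable (n k : ℕ)

/-- the bilinear form -/
def bf (x y : Fin n → ℚ) : ℚ :=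
  (∑ i, x i * y i) + ((2 - (k : ℚ)) / (k : ℚ) ^ 2) * ((∑ i, x i) * (∑ i, y i))

lemma bf_symm (x y : Fin n → ℚ) : bf n k x y = bf n k y x := by
  unfold bf
  rw [Finset.sum_congr rfl fun i _ => mul_comm (x i) (y i)]
  ring

lemma bf_add_left (x y z : Fin n → ℚ) : bf n k (x + y) z = bf n k x z + bf n k y z := by
  simp only [bf, Pi.add_apply, add_mul, Finset.sum_add_distrib]; ring

lemma bf_smul_left (c : ℚ) (x z : Fin n → ℚ) : bf n k (c • x) z = c * bf n k x z := by
  simp only [bf, Pi.smul_apply, smul_eq_mul, mul_assoc, ← Finset.mul_sum]; ring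

lemma bf_neg_left (x z : Fin n → ℚ) : bf n k (-x) z = - bf n k x z := by
  have := bf_smul_left n k (-1) x z; simpa using this

lemma bf_sub_left (x y z : Fin n → ℚ) : bf n k (x - y) z = bf n k x z - bf n k y z := by
  rw [sub_eq_add_neg, bf_add_left, bf_neg_left]; ring

lemma bf_add_right (x y z : Fin n → ℚ) : bf n k x (y + z) = bf n k x y + bf n k x z := by
  rw [bf_symm, bf_add_left, bf_symm n k y, bf_symm n k z]

lemma bf_smul_right (c : ℚ) (x z : Fin n → ℚ) : bf n k x (c • z) = c * bf n k x z := by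
  rw [bf_symm, bf_smul_left, bf_symm]

lemma bf_sub_right (x y z : Fin n → ℚ) : bf n k x (y - z) = bf n k x y - bf n k x z := by
  rw [bf_symm, bf_sub_left, bf_symm n k y, bf_symm n k z]

end WProof

end A

section B
open Finset
namespace WProof

variable (n k : ℕ)

lemma sum_mul_stdE (x : Fin n → ℚ) (a : ℕ) (ha : a < n) :
    ∑ j, x j * stdE n (a + 1) j = x ⟨a, ha⟩ := by
  rw [Finset.sum_eq_single (⟨a, ha⟩ : Fin n)]
  · simp [stdE]
  · intro b _ hb
    have : (b : ℕ) ≠ a := fun h => hb (by ext; exact h)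
    simp [stdE, this]
  · simp

lemma sum_stdE (a : ℕ) (ha : a < n) : ∑ j, stdE n (a + 1) j = 1 := by
  have := sum_mul_stdE n (fun _ => (1 : ℚ)) a ha
  simpa using this

lemma alphaRoot_sum (a : ℕ) (ha : a + 1 < n) : ∑ j, alphaRoot n (a + 1) j = 0 := by
  simp only [alphaRoot, Pi.sub_apply, Finset.sum_sub_distrib]
  rw [sum_stdE n (a + 1) ha, sum_stdE n a (by omega)]
  ring

lemma bf_alphaRoot (x : Fin n → ℚ) (a : ℕ) (ha : a + 1 < n) :
    bf n k x (alphaRoot n (a + 1)) = x ⟨a + 1, ha⟩ - x ⟨a, by omega⟩ := by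
  unfold bf
  have h1 : ∑ j, x j * alphaRoot n (a + 1) j
      = x ⟨a + 1, ha⟩ - x ⟨a, by omega⟩ := by
    simp only [alphaRoot, Pi.sub_apply, mul_sub, Finset.sum_sub_distrib]
    rw [sum_mul_stdE n x (a + 1) ha, sum_mul_stdE n x a (by omega)]
  rw [h1, alphaRoot_sum n a ha]
  ring

lemma alphaRoot_apply (a : ℕ) (j : Fin n) :
    alphaRoot n (a + 1) j
      = (if (j : ℕ) = a + 1 then 1 else 0) - (if (j : ℕ) = a then 1 else 0) := by
  simp only [alphaRoot, stdE, Pi.sub_apply,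
    show ((j:ℕ) + 1 = a + 1 + 1) ↔ ((j:ℕ) = a + 1) from by omega,
    show ((j:ℕ) + 1 = a + 1) ↔ ((j:ℕ) = a) from by omega]

lemma sum_betaRoot (hkn : k ≤ n) : ∑ j, betaRoot n k j = k := by
  unfold betaRoot
  rw [Fin.sum_univ_eq_sum_range (fun j => if j < k then (1:ℚ) else 0) n]
  rw [← Finset.sum_filter]
  have : (Finset.range n).filter (· < k) = Finset.range k := by
    ext a; simp; try omega
  simp [this]

lemma sum_filter_betaRoot (x : Fin n → ℚ) :
    ∑ j, x j * betaRoot n k j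
      = ∑ i ∈ Finset.univ.filter (fun i : Fin n => (i : ℕ) < k), x i := by
  unfold betaRoot
  simp only [mul_ite, mul_one, mul_zero]
  rw [← Finset.sum_filter]

lemma sum_filter_lt_one (hkn : k ≤ n) :
    ∑ i ∈ Finset.univ.filter (fun i : Fin n => (i : ℕ) < k), (1:ℚ) = k := by
  have := sum_filter_betaRoot n k (fun _ => (1:ℚ))
  simp only [one_mul] at this
  rw [← this, sum_betaRoot n k hkn]

lemma bf_betaRoot (x : Fin n → ℚ) (hk : 1 ≤ k) (hkn : k ≤ n) :
    bf n k x (betaRoot n k)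
      = (∑ i ∈ Finset.univ.filter (fun i : Fin n => (i : ℕ) < k), x i)
        + ((2 - (k : ℚ)) / (k : ℚ)) * (∑ i, x i) := by
  unfold bf
  rw [sum_filter_betaRoot, sum_betaRoot n k hkn]
  have hk0 : (k : ℚ) ≠ 0 := by positivity
  field_simp

lemma rco_eq_neg_bf (x : Fin n → ℚ) (hk : 1 ≤ k) (hkn : k ≤ n) :
    rco n k x = - bf n k x (betaRoot n k) := by
  rw [bf_betaRoot n k x hk hkn]
  unfold rco degv
  have hk0 : (k : ℚ) ≠ 0 := by positivity
  have hsplit : (∑ i ∈ Finset.univ.filter (fun i : Fin n => (i : ℕ) < k), x i)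
      + (∑ i ∈ Finset.univ.filter (fun i : Fin n => k ≤ (i : ℕ)), x i) = ∑ i, x i := by
    rw [← Finset.sum_filter_add_sum_filter_not Finset.univ (fun i : Fin n => (i : ℕ) < k) x]
    congr 1
    apply Finset.sum_congr _ (fun _ _ => rfl)
    ext a; simp; try omega
  have h2 : (∑ i ∈ Finset.univ.filter (fun i : Fin n => k ≤ (i : ℕ)), x i)
      = (∑ i, x i) - (∑ i ∈ Finset.univ.filter (fun i : Fin n => (i : ℕ) < k), x i) := by
    linarith
  rw [h2]
  field_simp
  ring

/-- the simple roots, indexed by `Fin n`: the first `n-1` are the `α`'s, the last is `β`. -/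
def sroot (i : Fin n) : Fin n → ℚ :=
  if (i : ℕ) < n - 1 then alphaRoot n ((i : ℕ) + 1) else betaRoot n k

lemma sroot_alpha (i : Fin n) (h : (i : ℕ) < n - 1) :
    sroot n k i = alphaRoot n ((i : ℕ) + 1) := by simp [sroot, h]

lemma sroot_beta (i : Fin n) (h : ¬ (i : ℕ) < n - 1) : sroot n k i = betaRoot n k := by
  simp [sroot, h]

lemma bf_sroot_alpha (x : Fin n → ℚ) (i : Fin n) (h : (i : ℕ) < n - 1) :
    bf n k x (sroot n k i) = x ⟨(i : ℕ) + 1, by omega⟩ - x ⟨(i : ℕ), by omega⟩ := by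
  rw [sroot_alpha n k i h, bf_alphaRoot n k x (i : ℕ) (by omega)]

lemma bf_sroot_self (hk : 1 ≤ k) (hkn : k < n) (i : Fin n) :
    bf n k (sroot n k i) (sroot n k i) = 2 := by
  by_cases h : (i : ℕ) < n - 1
  · rw [bf_sroot_alpha n k _ i h, sroot_alpha n k i h,
      alphaRoot_apply, alphaRoot_apply]
    simp only [Fin.val_mk]
    split_ifs <;> first | (exfalso; omega) | norm_num
  · rw [sroot_beta n k i h, bf_betaRoot n k _ hk (le_of_lt hkn),
      sum_betaRoot n k (le_of_lt hkn)]
    have : ∑ i ∈ Finset.univ.filter (fun i : Fin n => (i : ℕ) < k), betaRoot n k i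
        = ∑ i ∈ Finset.univ.filter (fun i : Fin n => (i : ℕ) < k), (1:ℚ) := by
      apply Finset.sum_congr rfl
      intro j hj
      simp only [Finset.mem_filter] at hj
      simp [betaRoot, hj.2]
    rw [this, sum_filter_lt_one n k (le_of_lt hkn)]
    have hk0 : (k : ℚ) ≠ 0 := by positivity
    field_simp
    try ring

lemma bf_sroot_pair (hk : 1 ≤ k) (hkn : k < n) (i j : Fin n) (hij : i ≠ j) :
    bf n k (sroot n k i) (sroot n k j) = 0 ∨ bf n k (sroot n k i) (sroot n k j) = -1 := by
  by_cases hj : (j : ℕ) < n - 1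
  · rw [bf_sroot_alpha n k _ j hj]
    by_cases hi : (i : ℕ) < n - 1
    · -- alpha-alpha
      have hne : (i : ℕ) ≠ (j : ℕ) := fun h => hij (by ext; exact h)
      rw [sroot_alpha n k i hi, alphaRoot_apply, alphaRoot_apply]
      simp only [Fin.val_mk]
      by_cases h1 : (j : ℕ) + 1 = (i : ℕ)
      · right; split_ifs <;> first | (exfalso; omega) | norm_num
      · by_cases h2 : (i : ℕ) + 1 = (j : ℕ)
        · right; split_ifs <;> first | (exfalso; omega) | norm_num
        · left; split_ifs <;> first | (exfalso; omega) | norm_num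
    · -- i beta, j alpha
      rw [sroot_beta n k i hi]
      unfold betaRoot
      simp only [Fin.val_mk]
      by_cases h1 : (j : ℕ) + 1 = k
      · right; split_ifs <;> first | (exfalso; omega) | norm_num
      · left; split_ifs <;> first | (exfalso; omega) | norm_num
  · -- j beta, i alpha
    have hi : (i : ℕ) < n - 1 := by
      rcases lt_or_ge (i : ℕ) (n-1) with h | h
      · exact h
      · exfalso; apply hij; ext
        have h1 := i.isLt; have h2 := j.isLt; omega
    rw [bf_symm, bf_sroot_alpha n k _ i hi, sroot_beta n k j hj]
    unfold betaRoot
    simp only [Fin.val_mk]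
    by_cases h1 : (i : ℕ) + 1 = k
    · right; split_ifs <;> first | (exfalso; omega) | norm_num
    · left; split_ifs <;> first | (exfalso; omega) | norm_num

end WProof
end B

section C
open Finset Matrix
namespace WProof

variable (n k : ℕ)

/-- the simple reflections as functions -/
def rf (i : Fin n) (x : Fin n → ℚ) : Fin n → ℚ := x - bf n k x (sroot n k i) • sroot n k i

lemma rf_apply (i : Fin n) (x : Fin n → ℚ) (j : Fin n) :
    rf n k i x j = x j - bf n k x (sroot n k i) * sroot n k i j := by
  simp [rf]

lemma bf_rf_left (i : Fin n) (x y : Fin n → ℚ) :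
    bf n k (rf n k i x) y = bf n k x y - bf n k x (sroot n k i) * bf n k (sroot n k i) y := by
  unfold rf
  rw [bf_sub_left, bf_smul_left]

lemma rf_invol (hk : 1 ≤ k) (hkn : k < n) (i : Fin n) (x : Fin n → ℚ) :
    rf n k i (rf n k i x) = x := by
  funext j
  rw [rf_apply, rf_apply, bf_rf_left, bf_sroot_self n k hk hkn]
  ring

lemma rf_add (i : Fin n) (x y : Fin n → ℚ) :
    rf n k i (x + y) = rf n k i x + rf n k i y := by
  funext j
  simp only [rf_apply, Pi.add_apply, bf_add_left]
  ring

lemma rf_smul (i : Fin n) (c : ℚ) (x : Fin n → ℚ) :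
    rf n k i (c • x) = c • rf n k i x := by
  funext j
  simp only [rf_apply, Pi.smul_apply, bf_smul_left, smul_eq_mul]
  ring

lemma rf_linear (i : Fin n) : IsLinearMap ℚ (rf n k i) :=
  ⟨rf_add n k i, rf_smul n k i⟩

/-- the simple reflections as permutations -/
def rperm (hk : 1 ≤ k) (hkn : k < n) (i : Fin n) : Equiv.Perm (Fin n → ℚ) :=
  ⟨rf n k i, rf n k i, rf_invol n k hk hkn i, rf_invol n k hk hkn i⟩

lemma rperm_apply (hk : 1 ≤ k) (hkn : k < n) (i : Fin n) (x : Fin n → ℚ) :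
    rperm n k hk hkn i x = rf n k i x := rfl

lemma rperm_mul_self (hk : 1 ≤ k) (hkn : k < n) (i : Fin n) :
    rperm n k hk hkn i * rperm n k hk hkn i = 1 :=
  Equiv.ext fun x => rf_invol n k hk hkn i x

lemma rperm_inv (hk : 1 ≤ k) (hkn : k < n) (i : Fin n) :
    (rperm n k hk hkn i)⁻¹ = rperm n k hk hkn i := by
  rw [eq_comm, eq_inv_iff_mul_eq_one, rperm_mul_self]

/-- commutation relation -/
lemma rf_comm (i j : Fin n) (h : bf n k (sroot n k i) (sroot n k j) = 0) (x : Fin n → ℚ) :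
    rf n k i (rf n k j x) = rf n k j (rf n k i x) := by
  have h' : bf n k (sroot n k j) (sroot n k i) = 0 := by rw [bf_symm]; exact h
  funext m
  simp only [rf_apply, bf_rf_left, h, h']
  ring

/-- braid relation -/
lemma rf_braid (hk : 1 ≤ k) (hkn : k < n) (i j : Fin n)
    (h : bf n k (sroot n k i) (sroot n k j) = -1) (x : Fin n → ℚ) :
    rf n k i (rf n k j (rf n k i x)) = rf n k j (rf n k i (rf n k j x)) := by
  have h' : bf n k (sroot n k j) (sroot n k i) = -1 := by rw [bf_symm]; exact h
  have hi := bf_sroot_self n k hk hkn i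
  have hj := bf_sroot_self n k hk hkn j
  funext m
  simp only [rf_apply, bf_rf_left, h, h', hi, hj]
  ring

/-- bf against a delta vector -/
lemma bf_delta (b : Fin n) (y : Fin n → ℚ) :
    bf n k (fun j' => if j' = b then (1:ℚ) else 0) y
      = y b + ((2 - (k : ℚ)) / (k : ℚ) ^ 2) * (∑ i, y i) := by
  unfold bf
  have h1 : ∑ i, (if i = b then (1:ℚ) else 0) * y i = y b := by
    rw [Finset.sum_eq_single b] <;> simp +contextual
  have h2 : ∑ i : Fin n, (if i = b then (1:ℚ) else 0) = 1 := by
    rw [Finset.sum_eq_single b] <;> simp +contextual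
  rw [show (∑ i, (fun j' => if j' = b then (1:ℚ) else 0) i * y i)
    = ∑ i, (if i = b then (1:ℚ) else 0) * y i from rfl, h1]
  rw [show (∑ i, (fun j' => if j' = b then (1:ℚ) else 0) i)
    = ∑ i : Fin n, (if i = b then (1:ℚ) else 0) from rfl, h2]
  ring

lemma bf_decomp (x y : Fin n → ℚ) :
    ∑ b, x b * bf n k (fun j' => if j' = b then (1:ℚ) else 0) y = bf n k x y := by
  have h : ∀ b ∈ Finset.univ, x b * bf n k (fun j' => if j' = b then (1:ℚ) else 0) y
      = x b * y b + ((2 - (k : ℚ)) / (k : ℚ) ^ 2) * (x b * ∑ i, y i) := by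
    intro b _; rw [bf_delta]; ring
  rw [Finset.sum_congr rfl h, Finset.sum_add_distrib, ← Finset.mul_sum, ← Finset.sum_mul]
  unfold bf
  ring

/-- the reflections as linear endomorphisms -/
def rlin (i : Fin n) : (Fin n → ℚ) →ₗ[ℚ] (Fin n → ℚ) := IsLinearMap.mk' _ (rf_linear n k i)

lemma rlin_apply (i : Fin n) (x : Fin n → ℚ) : rlin n k i x = rf n k i x := rfl

lemma det_rlin (hk : 1 ≤ k) (hkn : k < n) (i : Fin n) :
    LinearMap.det (rlin n k i) = -1 := by
  rw [← LinearMap.det_toMatrix']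
  have hmat : LinearMap.toMatrix' (rlin n k i)
      = 1 + Matrix.replicateCol Unit (sroot n k i)
          * Matrix.replicateRow Unit
            (fun b => - bf n k (fun j' => if j' = b then (1:ℚ) else 0) (sroot n k i)) := by
    ext a b
    rw [LinearMap.toMatrix'_apply]
    simp only [Matrix.add_apply, Matrix.mul_apply, Matrix.replicateCol_apply, Matrix.replicateRow_apply,
      Finset.univ_unique, Finset.sum_singleton, Matrix.one_apply]
    rw [rlin_apply, rf_apply]
    by_cases hab : a = b <;> simp [hab] <;> rw [show (Pi.single b (1:ℚ) : Fin n → ℚ) = fun j' => if j' = b then 1 else 0 from funext fun j' => Pi.single_apply b 1 j'] <;> ring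
  rw [hmat, Matrix.det_one_add_replicateCol_mul_replicateRow]
  have hdot : (fun b => - bf n k (fun j' => if j' = b then (1:ℚ) else 0) (sroot n k i)) ⬝ᵥ
      (sroot n k i) = - bf n k (sroot n k i) (sroot n k i) := by
    unfold dotProduct
    rw [← bf_decomp n k (sroot n k i) (sroot n k i), ← Finset.sum_neg_distrib]
    apply Finset.sum_congr rfl
    intro b _
    ring
  rw [hdot, bf_sroot_self n k hk hkn i]
  norm_num

end WProof
end C

section D
open Finset
namespace WProof

variable (n k : ℕ) (hk : 1 ≤ k) (hkn : k < n)

def wordProd (l : List (Fin n)) : Equiv.Perm (Fin n → ℚ) := (l.map (rperm n k hk hkn)).prod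

def elin (l : List (Fin n)) : Module.End ℚ (Fin n → ℚ) := (l.map (rlin n k)).prod

lemma wordProd_nil : wordProd n k hk hkn [] = 1 := rfl

lemma wordProd_cons (i : Fin n) (l : List (Fin n)) :
    wordProd n k hk hkn (i :: l) = rperm n k hk hkn i * wordProd n k hk hkn l := by
  simp [wordProd]

lemma wordProd_append (l₁ l₂ : List (Fin n)) :
    wordProd n k hk hkn (l₁ ++ l₂) = wordProd n k hk hkn l₁ * wordProd n k hk hkn l₂ := by
  simp [wordProd]

lemma wordProd_concat (l : List (Fin n)) (i : Fin n) :
    wordProd n k hk hkn (l.concat i) = wordProd n k hk hkn l * rperm n k hk hkn i := by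
  rw [List.concat_eq_append, wordProd_append]
  simp [wordProd]

lemma wordProd_apply (l : List (Fin n)) (x : Fin n → ℚ) :
    wordProd n k hk hkn l x = elin n k l x := by
  induction l generalizing x with
  | nil => rfl
  | cons i t ih =>
      rw [wordProd_cons, Equiv.Perm.mul_apply, ih]
      rfl

lemma det_elin (l : List (Fin n)) (hk : 1 ≤ k) (hkn : k < n) :
    LinearMap.det (elin n k l) = (-1 : ℚ) ^ l.length := by
  induction l with
  | nil => simp [elin]
  | cons i t ih =>
      have h2 : elin n k (i :: t) = rlin n k i * elin n k t := by simp [elin]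
      rw [h2, map_mul, ih, det_rlin n k hk hkn]

      rw [List.length_cons, pow_succ]
      ring

lemma word_parity (l₁ l₂ : List (Fin n)) (h : wordProd n k hk hkn l₁ = wordProd n k hk hkn l₂) :
    (-1 : ℚ) ^ l₁.length = (-1 : ℚ) ^ l₂.length := by
  have he : elin n k l₁ = elin n k l₂ := by
    apply LinearMap.ext
    intro x
    rw [← wordProd_apply n k hk hkn, ← wordProd_apply n k hk hkn, h]
  rw [← det_elin n k l₁ hk hkn, ← det_elin n k l₂ hk hkn, he]

def HasWord (w : Equiv.Perm (Fin n → ℚ)) : Prop := ∃ l, wordProd n k hk hkn l = w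

noncomputable def len (w : Equiv.Perm (Fin n → ℚ)) : ℕ :=
  sInf {m | ∃ l, wordProd n k hk hkn l = w ∧ l.length = m}

lemma len_spec {w : Equiv.Perm (Fin n → ℚ)} (hw : HasWord n k hk hkn w) :
    ∃ l, wordProd n k hk hkn l = w ∧ l.length = len n k hk hkn w := by
  obtain ⟨l, hl⟩ := hw
  exact Nat.sInf_mem (⟨l.length, l, hl, rfl⟩ : {m | ∃ l, wordProd n k hk hkn l = w ∧ l.length = m}.Nonempty)

lemma len_le (l : List (Fin n)) : len n k hk hkn (wordProd n k hk hkn l) ≤ l.length :=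
  Nat.sInf_le ⟨l, rfl, rfl⟩

lemma hasWord_mul (w : Equiv.Perm (Fin n → ℚ)) (hw : HasWord n k hk hkn w) (s : Fin n) :
    HasWord n k hk hkn (w * rperm n k hk hkn s) := by
  obtain ⟨l, hl⟩ := hw
  exact ⟨l.concat s, by rw [wordProd_concat, hl]⟩

lemma len_parity_word {w : Equiv.Perm (Fin n → ℚ)} (hw : HasWord n k hk hkn w)
    (l : List (Fin n)) (hl : wordProd n k hk hkn l = w) :
    (-1 : ℚ) ^ len n k hk hkn w = (-1 : ℚ) ^ l.length := by
  obtain ⟨l₀, hl₀, hlen⟩ := len_spec n k hk hkn hw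
  rw [← hlen]
  exact word_parity n k hk hkn l₀ l (by rw [hl₀, hl])

lemma len_mul_ne {w : Equiv.Perm (Fin n → ℚ)} (hw : HasWord n k hk hkn w) (s : Fin n) :
    len n k hk hkn (w * rperm n k hk hkn s) ≠ len n k hk hkn w := by
  intro heq
  obtain ⟨l', hl', hlen'⟩ := len_spec n k hk hkn (hasWord_mul n k hk hkn w hw s)
  have hw' : wordProd n k hk hkn (l'.concat s) = w := by
    rw [wordProd_concat, hl', mul_assoc, rperm_mul_self, mul_one]
  have h1 := len_parity_word n k hk hkn hw (l'.concat s) hw'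
  rw [List.length_concat, hlen', heq] at h1
  have : (-1 : ℚ) ^ len n k hk hkn w ≠ 0 := by
    apply pow_ne_zero; norm_num
  rw [pow_succ] at h1
  apply this
  linarith

lemma len_mul_le {w : Equiv.Perm (Fin n → ℚ)} (hw : HasWord n k hk hkn w) (s : Fin n) :
    len n k hk hkn (w * rperm n k hk hkn s) ≤ len n k hk hkn w + 1 := by
  obtain ⟨l, hl, hlen⟩ := len_spec n k hk hkn hw
  have h := len_le n k hk hkn (l.concat s)
  rw [wordProd_concat, hl, List.length_concat, hlen] at h
  exact h

/-- the positive cone spanned by the simple roots -/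
def Pos (v : Fin n → ℚ) : Prop :=
  ∃ c : Fin n → ℚ, (∀ i, 0 ≤ c i) ∧ v = ∑ i, c i • sroot n k i

lemma pos_sroot (i : Fin n) : Pos n k (sroot n k i) := by
  refine ⟨fun j => if j = i then 1 else 0, fun j => by positivity, ?_⟩
  rw [Finset.sum_eq_single i]
  · simp
  · intro b _ hb; simp [hb]
  · simp

lemma pos_add {u v : Fin n → ℚ} (hu : Pos n k u) (hv : Pos n k v) : Pos n k (u + v) := by
  obtain ⟨c, hc, hcv⟩ := hu
  obtain ⟨d, hd, hdv⟩ := hv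
  refine ⟨c + d, fun i => by have := hc i; have := hd i; simp [Pi.add_apply]; linarith, ?_⟩
  rw [hcv, hdv, ← Finset.sum_add_distrib]
  apply Finset.sum_congr rfl
  intro i _
  rw [Pi.add_apply, add_smul]

end WProof
end D

section E
open Finset
namespace WProof

variable (n k : ℕ) (hk : 1 ≤ k) (hkn : k < n)

lemma wordProd_add (l : List (Fin n)) (x y : Fin n → ℚ) :
    wordProd n k hk hkn l (x + y) = wordProd n k hk hkn l x + wordProd n k hk hkn l y := by
  rw [wordProd_apply, wordProd_apply, wordProd_apply, map_add]

lemma rperm_comm (s t : Fin n) (h : bf n k (sroot n k s) (sroot n k t) = 0) :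
    rperm n k hk hkn s * rperm n k hk hkn t = rperm n k hk hkn t * rperm n k hk hkn s :=
  Equiv.ext fun x => rf_comm n k s t h x

lemma rperm_braid (s t : Fin n) (h : bf n k (sroot n k s) (sroot n k t) = -1) :
    rperm n k hk hkn s * rperm n k hk hkn t * rperm n k hk hkn s
      = rperm n k hk hkn t * rperm n k hk hkn s * rperm n k hk hkn t :=
  Equiv.ext fun x => rf_braid n k hk hkn s t h x

theorem posRoot (m : ℕ) : ∀ w : Equiv.Perm (Fin n → ℚ), HasWord n k hk hkn w →
    len n k hk hkn w ≤ m → ∀ s : Fin n,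
    len n k hk hkn w < len n k hk hkn (w * rperm n k hk hkn s) →
    Pos n k (w (sroot n k s)) := by
  induction m with
  | zero =>
      intro w hw hlen s _
      obtain ⟨l, hl, hlenl⟩ := len_spec n k hk hkn hw
      have : l = [] := List.length_eq_zero_iff.mp (by omega)
      subst this
      rw [← hl, wordProd_nil, Equiv.Perm.one_apply]
      exact pos_sroot n k s
  | succ m IH =>
      intro w hw hlen s hs
      obtain ⟨l, hl, hlenl⟩ := len_spec n k hk hkn hw
      rcases List.eq_nil_or_concat l with rfl | ⟨l', t, rfl⟩
      · rw [← hl, wordProd_nil, Equiv.Perm.one_apply]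
        exact pos_sroot n k s
      · set u := wordProd n k hk hkn l' with hu_def
        have hu_word : HasWord n k hk hkn u := ⟨l', rfl⟩
        have hw_eq : u * rperm n k hk hkn t = w := by
          rw [hu_def, ← wordProd_concat, hl]
        have hu_eq : w * rperm n k hk hkn t = u := by
          rw [← hw_eq, mul_assoc, rperm_mul_self, mul_one]
        have hlu : len n k hk hkn u + 1 ≤ len n k hk hkn w := by
          have h1 : len n k hk hkn u ≤ l'.length := len_le n k hk hkn l'
          have h2 : (l'.concat t).length = l'.length + 1 := List.length_concat
          omega
        by_cases hts : t = s
        · subst hts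
          rw [hu_eq] at hs
          omega
        · have hst : s ≠ t := fun h => hts h.symm
          have happ : w (sroot n k s)
              = u (sroot n k s - bf n k (sroot n k s) (sroot n k t) • sroot n k t) := by
            rw [← hw_eq, Equiv.Perm.mul_apply, rperm_apply]
            rfl
          have hPos_ut : Pos n k (u (sroot n k t)) := by
            apply IH u hu_word (by omega) t
            rw [hw_eq]
            omega
          rcases bf_sroot_pair n k hk hkn s t hst with h0 | h1
          · -- commuting case
            have hne := len_mul_ne n k hk hkn hu_word s
            rcases lt_or_gt_of_ne hne with hlt | hgt
            · -- contradiction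
              exfalso
              have hcomm := rperm_comm n k hk hkn s t h0
              have hws : w * rperm n k hk hkn s
                  = (u * rperm n k hk hkn s) * rperm n k hk hkn t := by
                rw [← hw_eq, mul_assoc, mul_assoc, ← hcomm]
              have hb := len_mul_le n k hk hkn (hasWord_mul n k hk hkn u hu_word s) t
              rw [← hws] at hb
              omega
            · have hPos_us : Pos n k (u (sroot n k s)) := by
                apply IH u hu_word (by omega) s hgt
              rw [happ, h0, zero_smul, sub_zero]
              exact hPos_us
          · -- braid case
            have happ1 : w (sroot n k s) = u (sroot n k s + sroot n k t) := by
              rw [happ, h1]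
              congr 1
              module
            have hne := len_mul_ne n k hk hkn hu_word s
            rcases lt_or_gt_of_ne hne with hlt | hgt
            · -- descend once more
              set u' := u * rperm n k hk hkn s with hu'_def
              have hu'_word : HasWord n k hk hkn u' := hasWord_mul n k hk hkn u hu_word s
              have hu_eq' : u' * rperm n k hk hkn s = u := by
                rw [hu'_def, mul_assoc, rperm_mul_self, mul_one]
              have happ2 : w (sroot n k s) = u' (sroot n k t) := by
                rw [happ1, ← hu_eq', Equiv.Perm.mul_apply, rperm_apply]
                congr 1
                have e1 : rf n k s (sroot n k s + sroot n k t)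
                    = (sroot n k s + sroot n k t)
                      - bf n k (sroot n k s + sroot n k t) (sroot n k s) • sroot n k s := rfl
                rw [e1, bf_add_left, bf_sroot_self n k hk hkn, bf_symm n k (sroot n k t), h1]
                norm_num
              have hne2 := len_mul_ne n k hk hkn hu'_word t
              rcases lt_or_gt_of_ne hne2 with hlt2 | hgt2
              · -- second descent: contradiction via braid relation
                exfalso
                set u'' := u' * rperm n k hk hkn t with hu''_def
                have hu''_word : HasWord n k hk hkn u'' := hasWord_mul n k hk hkn u' hu'_word t
                have hu'_eq : u'' * rperm n k hk hkn t = u' := by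
                  rw [hu''_def, mul_assoc, rperm_mul_self, mul_one]
                have hbraid := rperm_braid n k hk hkn s t h1
                have hws : w * rperm n k hk hkn s
                    = (u'' * rperm n k hk hkn s) * rperm n k hk hkn t := by
                  have : w = u'' * rperm n k hk hkn t * rperm n k hk hkn s
                      * rperm n k hk hkn t := by
                    rw [← hw_eq, ← hu_eq', hu'_eq]
                    done
                  rw [this]
                  simp only [mul_assoc]
                  congr 1
                  rw [← mul_assoc, ← mul_assoc, ← hbraid, mul_assoc,
                    rperm_mul_self, mul_one]
                have hb1 := len_mul_le n k hk hkn hu''_word s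
                have hb2 := len_mul_le n k hk hkn (hasWord_mul n k hk hkn u'' hu''_word s) t
                rw [← hws] at hb2
                omega
              · rw [happ2]
                apply IH u' hu'_word (by omega) t hgt2
            · -- both up: positivity of sum
              have hPos_us : Pos n k (u (sroot n k s)) := IH u hu_word (by omega) s hgt
              rw [happ1]
              have hsplit : u (sroot n k s + sroot n k t)
                  = u (sroot n k s) + u (sroot n k t) := by
                rw [hu_def]
                exact wordProd_add n k hk hkn l' _ _
              rw [hsplit]
              exact pos_add n k hPos_us hPos_ut

end WProof
end E

section F
open Finset
namespace WProof

lemma sBeta_eq_rf (n k : ℕ) (hk : 1 ≤ k) (hkn : k < n) :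
    sBeta n k = rf n k ⟨n - 1, by omega⟩ := by
  have hβ : sroot n k ⟨n - 1, by omega⟩ = betaRoot n k :=
    sroot_beta n k _ (by simp)
  funext x
  unfold sBeta rf
  rw [hβ, rco_eq_neg_bf n k x hk (le_of_lt hkn), neg_smul, ← sub_eq_add_neg]

lemma sSwap_eq_rf (n k : ℕ) (a b : Fin n) (hab : (a : ℕ) + 1 = (b : ℕ)) :
    sSwap n a b = rf n k ⟨(a : ℕ), by have := b.isLt; omega⟩ := by
  have hb := b.isLt
  have ha' : ((⟨(a : ℕ), by omega⟩ : Fin n) : ℕ) < n - 1 := by simp; omega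
  funext x j
  have hbf : bf n k x (sroot n k ⟨(a : ℕ), by omega⟩) = x b - x a := by
    rw [bf_sroot_alpha n k x _ ha']
    congr 1 <;> apply congrArg x <;> (ext; simp only [Fin.val_mk]; omega)
  rw [rf_apply, hbf, sroot_alpha n k _ ha', alphaRoot_apply]
  simp only [Fin.val_mk]
  unfold sSwap
  simp only [Function.comp_apply]
  rcases eq_or_ne j a with rfl | hja
  · rw [Equiv.swap_apply_left, if_neg (by omega), if_pos rfl]
    ring
  · rcases eq_or_ne j b with rfl | hjb
    · rw [Equiv.swap_apply_right, if_pos (by omega), if_neg (by omega)]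
      ring
    · rw [Equiv.swap_apply_of_ne_of_ne hja hjb,
        if_neg (fun h => hjb (by ext; omega)),
        if_neg (fun h => hja (by ext; omega))]
      ring

lemma gen_eq_rperm (n k : ℕ) (hk : 1 ≤ k) (hkn : k < n) (σ : Equiv.Perm (Fin n → ℚ))
    (hσ : ⇑σ = sBeta n k ∨ ∃ a b : Fin n, (a : ℕ) + 1 = (b : ℕ) ∧ ⇑σ = sSwap n a b) :
    ∃ i, σ = rperm n k hk hkn i := by
  rcases hσ with h | ⟨a, b, hab, h⟩
  · refine ⟨⟨n - 1, by omega⟩, Equiv.ext fun x => ?_⟩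
    rw [congrFun h x, sBeta_eq_rf n k hk hkn]
    rfl
  · refine ⟨⟨(a : ℕ), by have := b.isLt; omega⟩, Equiv.ext fun x => ?_⟩
    rw [congrFun h x, sSwap_eq_rf n k a b hab]
    rfl

lemma wordProd_reverse (n k : ℕ) (hk : 1 ≤ k) (hkn : k < n) (l : List (Fin n)) :
    wordProd n k hk hkn l.reverse = (wordProd n k hk hkn l)⁻¹ := by
  induction l with
  | nil => simp [wordProd]
  | cons i t ih =>
      have h1 : wordProd n k hk hkn [i] = rperm n k hk hkn i := by simp [wordProd]
      rw [List.reverse_cons, wordProd_append, ih, h1, wordProd_cons, mul_inv_rev, rperm_inv]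

lemma mem_weyl_hasWord (n k : ℕ) (hk : 1 ≤ k) (hkn : k < n) (σ : Equiv.Perm (Fin n → ℚ))
    (hσ : σ ∈ weyl n k) : HasWord n k hk hkn σ := by
  refine Subgroup.closure_induction ?_ ?_ ?_ ?_ hσ
  · intro x hx
    obtain ⟨i, rfl⟩ := gen_eq_rperm n k hk hkn x hx
    exact ⟨[i], by simp [wordProd]⟩
  · exact ⟨[], rfl⟩
  · rintro x y _ _ ⟨lx, rfl⟩ ⟨ly, rfl⟩
    exact ⟨lx ++ ly, wordProd_append n k hk hkn lx ly⟩
  · rintro x _ ⟨l, rfl⟩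
    exact ⟨l.reverse, wordProd_reverse n k hk hkn l⟩

lemma bf_rf_inv (n k : ℕ) (hk : 1 ≤ k) (hkn : k < n) (i : Fin n) (x y : Fin n → ℚ) :
    bf n k (rf n k i x) (rf n k i y) = bf n k x y := by
  rw [bf_rf_left,
    bf_symm n k x (rf n k i y), bf_rf_left,
    bf_symm n k (sroot n k i) (rf n k i y), bf_rf_left,
    bf_sroot_self n k hk hkn,
    bf_symm n k y x, bf_symm n k y (sroot n k i),
    bf_symm n k (sroot n k i) x]
  ring

lemma bf_word_inv (n k : ℕ) (hk : 1 ≤ k) (hkn : k < n) (l : List (Fin n)) (x y : Fin n → ℚ) :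
    bf n k (wordProd n k hk hkn l x) (wordProd n k hk hkn l y) = bf n k x y := by
  induction l generalizing x y with
  | nil => rfl
  | cons i t ih =>
      simp only [wordProd_cons, Equiv.Perm.mul_apply, rperm_apply]
      rw [bf_rf_inv n k hk hkn, ih]

lemma wordProd_neg (n k : ℕ) (hk : 1 ≤ k) (hkn : k < n) (l : List (Fin n)) (x : Fin n → ℚ) :
    wordProd n k hk hkn l (-x) = - wordProd n k hk hkn l x := by
  rw [wordProd_apply, wordProd_apply, map_neg]

lemma sroot_sum (n k : ℕ) (hkn : k < n) (i : Fin n) :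
    ∑ j, sroot n k i j = if (i : ℕ) < n - 1 then 0 else (k : ℚ) := by
  by_cases h : (i : ℕ) < n - 1
  · rw [sroot_alpha n k i h, if_pos h, alphaRoot_sum n (i : ℕ) (by omega)]
  · rw [sroot_beta n k i h, if_neg h, sum_betaRoot n k (le_of_lt hkn)]

lemma degv_rep (n k : ℕ) (hk : 1 ≤ k) (hkn : k < n) (c : Fin n → ℚ) :
    degv n k (∑ i, c i • sroot n k i) = c ⟨n - 1, by omega⟩ := by
  unfold degv
  have h1 : ∑ j, (∑ i, c i • sroot n k i) j = ∑ i, c i * (∑ j, sroot n k i j) := by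
    simp only [Finset.sum_apply, Pi.smul_apply, smul_eq_mul, Finset.mul_sum]
    exact Finset.sum_comm
  rw [h1]
  have h2 : ∀ i, c i * (∑ j, sroot n k i j) = if (i:ℕ) < n - 1 then 0 else c i * k := by
    intro i
    rw [sroot_sum n k hkn i]
    by_cases h : (i : ℕ) < n - 1 <;> simp [h]
  rw [Finset.sum_congr rfl (fun i _ => h2 i)]
  rw [Finset.sum_eq_single (⟨n - 1, by omega⟩ : Fin n)]
  · rw [if_neg (by simp)]
    have hk0 : (k : ℚ) ≠ 0 := by positivity
    field_simp
  · intro b _ hb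
    rw [if_pos]
    have := b.isLt
    have : (b : ℕ) ≠ n - 1 := fun h => hb (by ext; simp [h])
    omega
  · simp

lemma degv_neg (n k : ℕ) (x : Fin n → ℚ) : degv n k (-x) = - degv n k x := by
  unfold degv
  rw [show ∑ i, (-x) i = - ∑ i, x i by simp, neg_div]

lemma bf_zero_right (n k : ℕ) (x : Fin n → ℚ) : bf n k x 0 = 0 := by
  simp [bf]

lemma bf_sum_right (n k : ℕ) (x : Fin n → ℚ) (g : Fin n → Fin n → ℚ) (s : Finset (Fin n)) :
    bf n k x (∑ i ∈ s, g i) = ∑ i ∈ s, bf n k x (g i) := by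
  induction s using Finset.induction with
  | empty => simp [bf_zero_right]
  | insert _ _ h ih => rw [Finset.sum_insert h, Finset.sum_insert h, bf_add_right, ih]

lemma degv_sBeta' (n k : ℕ) (hk : 1 ≤ k) (hkn : k < n) (x : Fin n → ℚ) :
    degv n k (sBeta n k x) = degv n k x + rco n k x := by
  unfold sBeta degv
  simp only [Pi.add_apply, Pi.smul_apply, smul_eq_mul]
  rw [Finset.sum_add_distrib, ← Finset.mul_sum, sum_betaRoot n k (le_of_lt hkn)]
  have hk0 : (k : ℚ) ≠ 0 := by positivity
  field_simp

end WProof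
end F

theorem sBeta_lowers_degree_of_sorted_real_root' (n k : ℕ) (hn : 2 ≤ n) (hk : 1 ≤ k)
    (hkn : k < n) (x : Fin n → ℚ) (hx : x ∈ realRoots n k) (hd : 1 ≤ degv n k x)
    (hmono : Antitone x) :
    degv n k (sBeta n k x) < degv n k x := by
  classical
  obtain ⟨σ, hσw, hσx⟩ := hx
  have hword := WProof.mem_weyl_hasWord n k hk hkn σ hσw
  set iβ : Fin n := ⟨n - 1, by omega⟩ with hiβ
  have hβ : WProof.sroot n k iβ = betaRoot n k := WProof.sroot_beta n k iβ (by simp [hiβ])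
  have hPosx : WProof.Pos n k x := by
    have hne := WProof.len_mul_ne n k hk hkn hword iβ
    rcases lt_or_gt_of_ne hne with hlt | hgt
    · exfalso
      set σ' := σ * WProof.rperm n k hk hkn iβ with hσ'
      have hσ'w : WProof.HasWord n k hk hkn σ' := WProof.hasWord_mul n k hk hkn σ hword iβ
      have hback : σ' * WProof.rperm n k hk hkn iβ = σ := by
        rw [hσ', mul_assoc, WProof.rperm_mul_self, mul_one]
      have hPos' : WProof.Pos n k (σ' (WProof.sroot n k iβ)) := by
        apply WProof.posRoot n k hk hkn (WProof.len n k hk hkn σ') σ' hσ'w le_rfl iβ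
        rw [hback]
        exact hlt
      have hval : σ' (WProof.sroot n k iβ) = -x := by
        rw [hσ', Equiv.Perm.mul_apply, WProof.rperm_apply]
        have h1 : WProof.rf n k iβ (WProof.sroot n k iβ) = -(WProof.sroot n k iβ) := by
          funext j
          rw [WProof.rf_apply, WProof.bf_sroot_self n k hk hkn, Pi.neg_apply]
          ring
        rw [h1]
        obtain ⟨l, hl⟩ := hword
        rw [← hl, WProof.wordProd_neg n k hk hkn l, hl, hβ, hσx]
      rw [hval] at hPos'
      obtain ⟨c, hc, hrep⟩ := hPos'
      have h1 : degv n k (-x) = c iβ := by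
        rw [hrep]; exact WProof.degv_rep n k hk hkn c
      have h2 : degv n k (-x) = - degv n k x := WProof.degv_neg n k x
      have h3 := hc iβ
      linarith
    · have := WProof.posRoot n k hk hkn (WProof.len n k hk hkn σ) σ hword le_rfl iβ hgt
      rwa [hβ, hσx] at this
  obtain ⟨c, hc, hrep⟩ := hPosx
  have hdeg : degv n k x = c iβ := by
    rw [hrep]; exact WProof.degv_rep n k hk hkn c
  have hbf2 : WProof.bf n k x x = 2 := by
    obtain ⟨l, hl⟩ := hword
    rw [← hσx, ← hl, WProof.bf_word_inv n k hk hkn l, ← hβ,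
      WProof.bf_sroot_self n k hk hkn]
  have hexp : WProof.bf n k x x = ∑ i, c i * WProof.bf n k x (WProof.sroot n k i) := by
    nth_rewrite 2 [hrep]
    rw [WProof.bf_sum_right n k x _ Finset.univ]
    apply Finset.sum_congr rfl
    intro i _
    rw [WProof.bf_smul_right]
  have hkey : 2 ≤ c iβ * WProof.bf n k x (WProof.sroot n k iβ) := by
    have hsplit : ∑ i ∈ Finset.univ.erase iβ, c i * WProof.bf n k x (WProof.sroot n k i)
          + c iβ * WProof.bf n k x (WProof.sroot n k iβ)
        = ∑ i, c i * WProof.bf n k x (WProof.sroot n k i) :=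
      Finset.sum_erase_add Finset.univ _ (Finset.mem_univ iβ)
    have hnonpos : ∑ i ∈ Finset.univ.erase iβ,
        c i * WProof.bf n k x (WProof.sroot n k i) ≤ 0 := by
      apply Finset.sum_nonpos
      intro i hi
      have hne : i ≠ iβ := (Finset.mem_erase.mp hi).1
      have hvne : (i : ℕ) ≠ n - 1 := fun h => hne (by ext; simp [h, hiβ])
      have hialpha : (i : ℕ) < n - 1 := by
        have := i.isLt; omega
      have hb := WProof.bf_sroot_alpha n k x i hialpha
      have hle : WProof.bf n k x (WProof.sroot n k i) ≤ 0 := by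
        rw [hb]
        have hmle := hmono (show (⟨(i : ℕ), by omega⟩ : Fin n) ≤ ⟨(i : ℕ) + 1, by omega⟩
          from by simp [Fin.le_def])
        linarith
      have := mul_nonneg (hc i) (neg_nonneg.mpr hle)
      linarith
    rw [hexp] at hbf2
    linarith
  have hcβ : 1 ≤ c iβ := by rw [← hdeg]; exact hd
  have hbfβ : 0 < WProof.bf n k x (WProof.sroot n k iβ) := by
    by_contra hcon
    push_neg at hcon
    nlinarith
  have hrco : rco n k x < 0 := by
    rw [WProof.rco_eq_neg_bf n k x hk (le_of_lt hkn), ← hβ]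
    linarith
  rw [WProof.degv_sBeta' n k hk hkn x]
  linarith

theorem sBeta_lowers_degree_of_sorted_real_root (n k : ℕ) (hn : 2 ≤ n) (hk : 1 ≤ k)
    (hkn : k < n) (x : Fin n → ℚ) (hx : x ∈ realRoots n k) (hd : 1 ≤ degv n k x)
    (hmono : Antitone x) :
    degv n k (sBeta n k x) < degv n k x := by
  exact sBeta_lowers_degree_of_sorted_real_root' n k hn hk hkn x hx hd hmono
end

section
/- For every integer d ≥ 2, the vector γ_d ∈ ℤ^n whose first k−3 coordinates equal d, whose (k−2)-nd coordinate equals d−1, whose coordinates in positions k−1 through k+2d−1 equal 1, and whose remaining coordinates equal 0, is a real root of degree d: γ_d ∈ W·β and deg(γ_d) = d. -/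
open Finset

/-- The root `γ_d`: first `k-3` coordinates equal `d`, coordinate `k-2` equals `d-1`,
coordinates `k-1` through `k+2d-1` equal `1`, the rest are `0` (1-based positions). -/
def gammaRoot (n k d : ℕ) : Fin n → ℚ := fun j =>
  if (j : ℕ) + 1 ≤ k - 3 then (d : ℚ)
  else if (j : ℕ) + 1 = k - 2 then (d : ℚ) - 1
  else if (j : ℕ) + 1 ≤ k + 2 * d - 1 then 1 else 0

section Aux

open Equiv

lemma sum_ind_lt (c : ℚ) (m N : ℕ) (h : m ≤ N) :
    ∑ j ∈ Finset.range N, (if j < m then c else 0) = m * c := by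
  rw [Finset.sum_ite, Finset.sum_const, Finset.sum_const_zero, add_zero]
  have : (Finset.range N).filter (fun j => j < m) = Finset.range m := by
    ext x; simp; omega
  rw [this, Finset.card_range, nsmul_eq_mul]

lemma sum_ind_eq (c : ℚ) (m N : ℕ) (h : m < N) :
    ∑ j ∈ Finset.range N, (if j = m then c else 0) = c := by
  rw [Finset.sum_ite_eq' (Finset.range N) m (fun _ => c)]
  simp [h]

lemma sum_gamma (n k d : ℕ) (hk : 3 ≤ k) (hd : 1 ≤ d) (hn : k + 2 * d - 1 ≤ n) :
    ∑ j, gammaRoot n k d j = (k : ℚ) * d := by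
  obtain ⟨k', rfl⟩ : ∃ k', k = k' + 3 := ⟨k - 3, by omega⟩
  obtain ⟨d', rfl⟩ : ∃ d', d = d' + 1 := ⟨d - 1, by omega⟩
  unfold gammaRoot
  rw [Fin.sum_univ_eq_sum_range (fun j =>
    if j + 1 ≤ k' + 3 - 3 then ((d' + 1 : ℕ) : ℚ)
    else if j + 1 = k' + 3 - 2 then ((d' + 1 : ℕ) : ℚ) - 1
    else if j + 1 ≤ k' + 3 + 2 * (d' + 1) - 1 then 1 else 0)]
  have hpt : ∀ j : ℕ, (if j + 1 ≤ k' + 3 - 3 then ((d' + 1 : ℕ) : ℚ)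
      else if j + 1 = k' + 3 - 2 then ((d' + 1 : ℕ) : ℚ) - 1
      else if j + 1 ≤ k' + 3 + 2 * (d' + 1) - 1 then 1 else 0)
      = (if j < k' then ((d' + 1 : ℕ) : ℚ) else 0)
        + (if j = k' then ((d' + 1 : ℕ) : ℚ) - 1 else 0)
        + ((if j < k' + 2 * d' + 4 then (1 : ℚ) else 0)
            - (if j < k' + 1 then (1 : ℚ) else 0)) := by
    intro j
    split_ifs <;> push_cast <;> first | ring1 | (exfalso; omega)
  simp_rw [hpt]
  rw [Finset.sum_add_distrib, Finset.sum_add_distrib, Finset.sum_sub_distrib,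
    sum_ind_lt _ _ _ (by omega), sum_ind_eq _ _ _ (by omega),
    sum_ind_lt _ _ _ (by omega), sum_ind_lt _ _ _ (by omega)]
  push_cast
  ring

lemma degv_gamma (n k d : ℕ) (hk : 3 ≤ k) (hd : 1 ≤ d) (hn : k + 2 * d - 1 ≤ n) :
    degv n k (gammaRoot n k d) = (d : ℚ) := by
  unfold degv
  rw [sum_gamma n k d hk hd hn]
  have hk0 : (k : ℚ) ≠ 0 := Nat.cast_ne_zero.mpr (by omega)
  exact mul_div_cancel_left₀ _ hk0

end Aux
lemma sum_tail_gamma (n k d : ℕ) (hk : 3 ≤ k) (hd : 1 ≤ d) (hn : k + 2 * d - 1 ≤ n) :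
    ∑ j ∈ Finset.univ.filter (fun j : Fin n => k ≤ (j : ℕ)), gammaRoot n k d j
      = 2 * (d : ℚ) - 1 := by
  obtain ⟨k', rfl⟩ : ∃ k', k = k' + 3 := ⟨k - 3, by omega⟩
  obtain ⟨d', rfl⟩ : ∃ d', d = d' + 1 := ⟨d - 1, by omega⟩
  rw [Finset.sum_filter]
  unfold gammaRoot
  rw [Fin.sum_univ_eq_sum_range (fun j =>
    if k' + 3 ≤ j then
      (if j + 1 ≤ k' + 3 - 3 then ((d' + 1 : ℕ) : ℚ)
      else if j + 1 = k' + 3 - 2 then ((d' + 1 : ℕ) : ℚ) - 1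
      else if j + 1 ≤ k' + 3 + 2 * (d' + 1) - 1 then 1 else 0) else 0)]
  have hpt : ∀ j : ℕ, (if k' + 3 ≤ j then
      (if j + 1 ≤ k' + 3 - 3 then ((d' + 1 : ℕ) : ℚ)
      else if j + 1 = k' + 3 - 2 then ((d' + 1 : ℕ) : ℚ) - 1
      else if j + 1 ≤ k' + 3 + 2 * (d' + 1) - 1 then 1 else 0) else 0)
      = (if j < k' + 2 * d' + 4 then (1 : ℚ) else 0)
        - (if j < k' + 3 then (1 : ℚ) else 0) := by
    intro j
    split_ifs <;> push_cast <;> first | ring1 | (exfalso; omega)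
  simp_rw [hpt]
  rw [Finset.sum_sub_distrib, sum_ind_lt _ _ _ (by omega), sum_ind_lt _ _ _ (by omega)]
  push_cast
  ring

lemma rco_gamma (n k d : ℕ) (hk : 3 ≤ k) (hd : 1 ≤ d) (hn : k + 2 * d - 1 ≤ n) :
    rco n k (gammaRoot n k d) = -1 := by
  unfold rco
  rw [sum_tail_gamma n k d hk hd hn, degv_gamma n k d hk hd hn]
  ring

lemma sum_beta (n k : ℕ) (hkn : k ≤ n) : ∑ j, betaRoot n k j = (k : ℚ) := by
  unfold betaRoot
  rw [Fin.sum_univ_eq_sum_range (fun j => if j < k then (1 : ℚ) else 0),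
    sum_ind_lt _ _ _ hkn, mul_one]

lemma tail_beta (n k : ℕ) :
    ∑ j ∈ Finset.univ.filter (fun j : Fin n => k ≤ (j : ℕ)), betaRoot n k j = 0 := by
  apply Finset.sum_eq_zero
  intro j hj
  simp only [Finset.mem_filter] at hj
  unfold betaRoot
  rw [if_neg (by omega)]

lemma rco_add_smul (n k : ℕ) (hk : 3 ≤ k) (hkn : k ≤ n) (x : Fin n → ℚ) (c : ℚ) :
    rco n k (x + c • betaRoot n k) = rco n k x - 2 * c := by
  have hk0 : (k : ℚ) ≠ 0 := Nat.cast_ne_zero.mpr (by omega)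
  unfold rco degv
  simp only [Pi.add_apply, Pi.smul_apply, smul_eq_mul]
  rw [Finset.sum_add_distrib, Finset.sum_add_distrib, ← Finset.mul_sum, ← Finset.mul_sum,
    tail_beta n k, sum_beta n k hkn]
  field_simp
  ring

lemma sBeta_invol (n k : ℕ) (hk : 3 ≤ k) (hkn : k ≤ n) :
    Function.Involutive (sBeta n k) := by
  intro x
  unfold sBeta
  rw [rco_add_smul n k hk hkn]
  funext j
  simp only [Pi.add_apply, Pi.smul_apply, smul_eq_mul]
  ring
/-- the permutation of `ℚ^n` induced by a permutation of coordinates. -/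
def permOf (n : ℕ) (τ : Equiv.Perm (Fin n)) : Equiv.Perm (Fin n → ℚ) :=
  Equiv.arrowCongr τ (Equiv.refl ℚ)

lemma permOf_apply (n : ℕ) (τ : Equiv.Perm (Fin n)) (x : Fin n → ℚ) :
    permOf n τ x = x ∘ τ.symm := rfl

lemma permOf_mul (n : ℕ) (τ σ : Equiv.Perm (Fin n)) :
    permOf n (τ * σ) = permOf n τ * permOf n σ := by
  ext x j
  rfl

lemma permOf_swap_mem_weyl_le (n k : ℕ) (a b : Fin n) (hab : (a : ℕ) ≤ (b : ℕ)) :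
    permOf n (Equiv.swap a b) ∈ weyl n k := by
  obtain ⟨m, hm⟩ : ∃ m, (b : ℕ) = (a : ℕ) + m := ⟨(b : ℕ) - a, by omega⟩
  clear hab
  induction m generalizing a b with
  | zero =>
      have : a = b := Fin.ext (by omega)
      subst this
      rw [Equiv.swap_self]
      show permOf n (1 : Equiv.Perm (Fin n)) ∈ weyl n k
      have : permOf n (1 : Equiv.Perm (Fin n)) = 1 := by ext x j; rfl
      rw [this]; exact one_mem _
  | succ m ih =>
      rcases Nat.eq_zero_or_pos m with hm0 | hm0
      · subst hm0
        apply Subgroup.subset_closure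
        right
        exact ⟨a, b, by omega, by
          funext x; rw [permOf_apply, Equiv.symm_swap]; rfl⟩
      · have hb : (a : ℕ) + m < n := by have := b.isLt; omega
        set c : Fin n := ⟨(a : ℕ) + m, hb⟩ with hc
        have hac : a ≠ c := by
          intro h; apply_fun Fin.val at h; simp [hc] at h; omega
        have hab' : a ≠ b := by
          intro h; apply_fun Fin.val at h; omega
        have hcb : c ≠ b := by
          intro h; apply_fun Fin.val at h; simp [hc] at h; omega
        have key : Equiv.swap c b * Equiv.swap a c * Equiv.swap c b
            = Equiv.swap a b := by
          rw [Equiv.swap_mul_swap_mul_swap hac hab']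
          exact Equiv.swap_comm b a
        rw [← key, permOf_mul, permOf_mul]
        have h1 : permOf n (Equiv.swap c b) ∈ weyl n k := by
          apply Subgroup.subset_closure
          right
          exact ⟨c, b, by simp [hc]; omega, by
            funext x; rw [permOf_apply, Equiv.symm_swap]; rfl⟩
        exact mul_mem (mul_mem h1 (ih a c (by simp [hc]))) h1

lemma permOf_swap_mem_weyl (n k : ℕ) (a b : Fin n) :
    permOf n (Equiv.swap a b) ∈ weyl n k := by
  rcases le_total (a : ℕ) (b : ℕ) with hab | hab
  · exact permOf_swap_mem_weyl_le n k a b hab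
  · rw [Equiv.swap_comm]
    exact permOf_swap_mem_weyl_le n k b a hab
lemma realRoots_apply_mem (n k : ℕ) {σ : Equiv.Perm (Fin n → ℚ)} (hσ : σ ∈ weyl n k)
    {x : Fin n → ℚ} (hx : x ∈ realRoots n k) : σ x ∈ realRoots n k := by
  obtain ⟨ρ, hρ, rfl⟩ := hx
  exact ⟨σ * ρ, mul_mem hσ hρ, rfl⟩

lemma realRoots_comp_swap (n k : ℕ) (a b : Fin n) {x : Fin n → ℚ}
    (hx : x ∈ realRoots n k) : x ∘ Equiv.swap a b ∈ realRoots n k := by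
  have := realRoots_apply_mem n k (permOf_swap_mem_weyl n k a b) hx
  rwa [permOf_apply, Equiv.symm_swap] at this

lemma realRoots_sBeta (n k : ℕ) (hk : 3 ≤ k) (hkn : k ≤ n) {x : Fin n → ℚ}
    (hx : x ∈ realRoots n k) : sBeta n k x ∈ realRoots n k := by
  have h := realRoots_apply_mem n k (σ := (sBeta_invol n k hk hkn).toPerm _)
    (Subgroup.subset_closure (Or.inl rfl)) hx
  exact h

lemma beta_mem_realRoots (n k : ℕ) : betaRoot n k ∈ realRoots n k :=
  ⟨1, one_mem _, rfl⟩

lemma gamma_one_eq (n k : ℕ) (hk : 3 ≤ k) (hn : k + 1 ≤ n) :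
    betaRoot n k ∘ Equiv.swap (⟨k - 3, by omega⟩ : Fin n) (⟨k, by omega⟩ : Fin n)
      = gammaRoot n k 1 := by
  obtain ⟨k', rfl⟩ : ∃ k', k = k' + 3 := ⟨k - 3, by omega⟩
  funext j
  simp only [Function.comp_apply, Equiv.swap_apply_def, betaRoot, gammaRoot, Fin.ext_iff]
  have hj := j.isLt
  split_ifs <;> simp_all <;> omega
set_option maxHeartbeats 4000000 in
lemma gamma_step (n k d : ℕ) (hk : 3 ≤ k) (hd : 1 ≤ d) (hn : k + 2 * (d + 1) - 1 ≤ n)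
    (a1 b1 a2 b2 : Fin n) (ha1 : (a1 : ℕ) = k - 2) (hb1 : (b1 : ℕ) = k + 2 * d - 1)
    (ha2 : (a2 : ℕ) = k - 1) (hb2 : (b2 : ℕ) = k + 2 * d) :
    (gammaRoot n k d ∘ Equiv.swap a1 b1) ∘ Equiv.swap a2 b2
      = gammaRoot n k (d + 1) + (-1 : ℚ) • betaRoot n k := by
  obtain ⟨k', rfl⟩ : ∃ k', k = k' + 3 := ⟨k - 3, by omega⟩
  obtain ⟨d', rfl⟩ : ∃ d', d = d' + 1 := ⟨d - 1, by omega⟩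
  funext j
  simp only [Function.comp_apply, Pi.add_apply, Pi.smul_apply, smul_eq_mul]
  by_cases h2a : j = a2
  · rw [h2a, Equiv.swap_apply_left]
    rw [Equiv.swap_apply_of_ne_of_ne (by intro hE; rw [Fin.ext_iff] at hE; omega)
      (by intro hE; rw [Fin.ext_iff] at hE; omega)]
    simp only [gammaRoot, betaRoot, hb2, ha2]
    split_ifs <;> push_cast <;> first | ring1 | (exfalso; omega)
  by_cases h2b : j = b2
  · rw [h2b, Equiv.swap_apply_right]
    rw [Equiv.swap_apply_of_ne_of_ne (by intro hE; rw [Fin.ext_iff] at hE; omega)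
      (by intro hE; rw [Fin.ext_iff] at hE; omega)]
    simp only [gammaRoot, betaRoot, hb2, ha2]
    split_ifs <;> push_cast <;> first | ring1 | (exfalso; omega)
  rw [Equiv.swap_apply_of_ne_of_ne h2a h2b]
  have h2a' : (j : ℕ) ≠ k' + 3 - 1 := fun hE => h2a (Fin.ext (by omega))
  have h2b' : (j : ℕ) ≠ k' + 3 + 2 * (d' + 1) := fun hE => h2b (Fin.ext (by omega))
  by_cases h1a : j = a1
  · rw [h1a, Equiv.swap_apply_left]
    simp only [gammaRoot, betaRoot, ha1, hb1]
    split_ifs <;> push_cast <;> first | ring1 | (exfalso; omega)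
  by_cases h1b : j = b1
  · rw [h1b, Equiv.swap_apply_right]
    simp only [gammaRoot, betaRoot, ha1, hb1]
    split_ifs <;> push_cast <;> first | ring1 | (exfalso; omega)
  rw [Equiv.swap_apply_of_ne_of_ne h1a h1b]
  have h1a' : (j : ℕ) ≠ k' + 3 - 2 := fun hE => h1a (Fin.ext (by omega))
  have h1b' : (j : ℕ) ≠ k' + 3 + 2 * (d' + 1) - 1 := fun hE => h1b (Fin.ext (by omega))
  simp only [gammaRoot, betaRoot]
  split_ifs <;> push_cast <;> first | ring1 | (exfalso; omega)
lemma gamma_mem (n k : ℕ) (hk : 3 ≤ k) :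
    ∀ d, 1 ≤ d → k + 2 * d - 1 ≤ n → gammaRoot n k d ∈ realRoots n k := by
  intro d
  induction d with
  | zero => intro h; omega
  | succ d ih =>
    intro _ hn
    rcases Nat.eq_zero_or_pos d with rfl | hd
    · rw [← gamma_one_eq n k hk (by omega)]
      exact realRoots_comp_swap n k _ _ (beta_mem_realRoots n k)
    · have hmem := ih hd (by omega)
      have h1 := realRoots_comp_swap n k (⟨k - 2, by omega⟩ : Fin n)
        (⟨k + 2 * d - 1, by omega⟩ : Fin n) hmem
      have h2 := realRoots_comp_swap n k (⟨k - 1, by omega⟩ : Fin n)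
        (⟨k + 2 * d, by omega⟩ : Fin n) h1
      have h3 := realRoots_sBeta n k hk (by omega) h2
      rw [gamma_step n k d hk hd hn _ _ _ _ rfl rfl rfl rfl] at h3
      have heq : sBeta n k (gammaRoot n k (d + 1) + (-1 : ℚ) • betaRoot n k)
          = gammaRoot n k (d + 1) := by
        unfold sBeta
        rw [rco_add_smul n k hk (by omega), rco_gamma n k (d + 1) hk (by omega) hn]
        funext j
        simp only [Pi.add_apply, Pi.smul_apply, smul_eq_mul]
        ring
      rwa [heq] at h3


theorem gammaRoot_is_real_root (n k d : ℕ) (hk : 3 ≤ k) (hd : 2 ≤ d)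
    (hn : k + 2 * d - 1 ≤ n) :
    gammaRoot n k d ∈ realRoots n k ∧ degv n k (gammaRoot n k d) = (d : ℚ) := by
  exact ⟨gamma_mem n k hk d (by omega) hn, degv_gamma n k d hk (by omega) hn⟩
end

section
/- Let x ∈ ℤ^n with k dividing x_1+…+x_n, set d = (x_1+…+x_n)/k, and define x' ∈ ℤ^n by x'_i = d − x_{n+1−i} for i = 1,…,n. Then n−k divides x'_1+…+x'_n (indeed x'_1+…+x'_n = (n−k)·d), and q_{n−k}(x') = q_k(x), where for 1 ≤ m < n, q_m(y) = Σ_{i=1}^n y_i² + ((2−m)/m²)(Σ_{i=1}^n y_i)². -/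
open Finset

theorem duality_k_and_n_sub_k (n k : ℕ) (hn : 2 ≤ n) (hk : 1 ≤ k) (hkn : k ≤ n - 1)
    (x : Fin n → ℤ) (hdvd : (k : ℤ) ∣ ∑ i, x i) :
    (∑ i : Fin n, ((∑ j, x j) / (k : ℤ) - x i.rev)) =
        ((n : ℤ) - (k : ℤ)) * ((∑ j, x j) / (k : ℤ)) ∧
    qform n (n - k) (fun i => (((∑ j, x j) / (k : ℤ) - x i.rev : ℤ) : ℚ)) =
      qform n k (fun i => (x i : ℚ)) := by
  have hkn' : k ≤ n := hkn.trans (Nat.sub_le n 1)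
  have hk0 : (k:ℤ) ≠ 0 := by exact_mod_cast (by omega : k ≠ 0)
  obtain ⟨d, hd⟩ := hdvd
  have hdiv : (∑ j, x j) / (k:ℤ) = d := by rw [hd, Int.mul_ediv_cancel_left _ hk0]
  have hrevZ : ∑ i : Fin n, x i.rev = ∑ i, x i :=
    Fintype.sum_bijective Fin.rev Fin.rev_bijective _ _ (fun i => rfl)
  have hrevQ : ∑ i : Fin n, ((x i.rev : ℚ)) = ∑ i, (x i:ℚ) :=
    Fintype.sum_bijective Fin.rev Fin.rev_bijective _ _ (fun i => rfl)
  have hrevQ2 : ∑ i : Fin n, ((x i.rev : ℚ))^2 = ∑ i, (x i:ℚ)^2 :=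
    Fintype.sum_bijective Fin.rev Fin.rev_bijective _ _ (fun i => rfl)
  rw [hdiv]
  constructor
  · rw [Finset.sum_sub_distrib, hrevZ, hd, Finset.sum_const, Finset.card_univ,
      Fintype.card_fin, nsmul_eq_mul]
    ring
  · unfold qform
    have hS : (∑ i, (x i:ℚ)) = (k:ℚ) * (d:ℚ) := by exact_mod_cast hd
    have hnkQ : ((n - k : ℕ):ℚ) = (n:ℚ) - k := by
      rw [Nat.cast_sub hkn']
    have hkQ : (k:ℚ) ≠ 0 := by exact_mod_cast (by omega : k ≠ 0)
    have hnkQ0 : (n:ℚ) - k ≠ 0 := by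
      have : (k:ℚ) < n := by exact_mod_cast (by omega : k < n)
      linarith
    push_cast
    have e1 : ∑ i : Fin n, ((d:ℚ) - x i.rev)^2
        = (n:ℚ)*(d:ℚ)^2 - 2*d*(∑ i, (x i:ℚ)) + ∑ i, (x i:ℚ)^2 := by
      simp only [sub_sq]
      rw [Finset.sum_add_distrib, Finset.sum_sub_distrib, Finset.sum_const,
        Finset.card_univ, Fintype.card_fin, nsmul_eq_mul, ← Finset.mul_sum, hrevQ, hrevQ2]
    have e2 : ∑ i : Fin n, ((d:ℚ) - x i.rev) = (n:ℚ)*d - ∑ i, (x i:ℚ) := by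
      rw [Finset.sum_sub_distrib, Finset.sum_const, Finset.card_univ,
        Fintype.card_fin, nsmul_eq_mul, hrevQ]
    rw [e1, e2, hnkQ, hS]
    field_simp
    ring
end

section
/- Let x ∈ ℤ^n with k dividing x_1+…+x_n, set d = (x_1+…+x_n)/k, and assume d ≥ 1, d ≥ x_1 ≥ x_2 ≥ … ≥ x_n ≥ 0, and q(x) > 0. Then the number of indices i with 1 ≤ i ≤ k and x_i < d is at most 2d − 1, and the number of indices i with k < i ≤ n and x_i > 0 is at most 2d − 1. (Consequently x belongs to a natural root subsystem of type T_{2,2d−1,2d−1}, i.e. J_{2d−1,4d−2}.) -/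
open Finset

lemma card_filter_val_lt (n m : ℕ) (h : m < n) :
    (Finset.univ.filter (fun i : Fin n => (i : ℕ) < m)).card = m := by
  have : Finset.univ.filter (fun i : Fin n => (i : ℕ) < m) = Finset.Iio ⟨m, h⟩ := by
    ext i; simp only [mem_filter, mem_univ, true_and, Finset.mem_Iio, Fin.lt_def]
  rw [this, Fin.card_Iio]

lemma card_filter_val_le (n : ℕ) (j : Fin n) :
    (Finset.univ.filter (fun i : Fin n => (i : ℕ) ≤ (j : ℕ))).card = (j : ℕ) + 1 := by
  have : Finset.univ.filter (fun i : Fin n => (i : ℕ) ≤ (j : ℕ)) = Finset.Iic j := by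
    ext i; simp only [mem_filter, mem_univ, true_and, Finset.mem_Iic, Fin.le_def]
  rw [this, Fin.card_Iic]

set_option maxHeartbeats 1600000 in
theorem sorted_positive_element_small_support (n k : ℕ) (hn : 2 ≤ n) (hk : 1 ≤ k) (hkn : k < n)
    (x : Fin n → ℤ) (hdvd : (k : ℤ) ∣ ∑ i, x i)
    (d : ℤ) (hd : d = (∑ i, x i) / (k : ℤ)) (hd1 : 1 ≤ d)
    (hmono : Antitone x)
    (hx1 : x ⟨0, by omega⟩ ≤ d)
    (hxn : 0 ≤ x ⟨n - 1, by omega⟩)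
    (hq : 0 < qform n k (fun i => (x i : ℚ))) :
    ((Finset.univ.filter (fun i : Fin n => (i : ℕ) < k ∧ x i < d)).card : ℤ) ≤ 2 * d - 1 ∧
    ((Finset.univ.filter (fun i : Fin n => k ≤ (i : ℕ) ∧ 0 < x i)).card : ℤ) ≤ 2 * d - 1 := by
  have hk0 : (k : ℤ) ≠ 0 := Int.natCast_ne_zero.mpr (by omega)
  -- S = k * d
  obtain ⟨m, hm⟩ := hdvd
  have hS : ∑ i, x i = (k : ℤ) * d := by
    rw [hm] at hd ⊢
    rw [Int.mul_ediv_cancel_left _ hk0] at hd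
    rw [hd]
  -- bounds 0 ≤ x i ≤ d
  have hub : ∀ i, x i ≤ d := by
    intro i
    refine le_trans (hmono ?_) hx1
    simp [Fin.le_def]
  have hlb : ∀ i, 0 ≤ x i := by
    intro i
    refine le_trans hxn (hmono ?_)
    have := i.isLt
    rw [Fin.le_def]
    simp
    omega
  -- integer form of hq
  have hqZ : 0 < (∑ i, (x i) ^ 2) + (2 - (k : ℤ)) * d ^ 2 := by
    have hSq : (∑ i, ((x i : ℚ))) = (k : ℚ) * (d : ℚ) := by
      exact_mod_cast congrArg (fun z : ℤ => (z : ℚ)) hS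
    rw [qform] at hq
    rw [show (∑ i, ((x i : ℚ))) = (k : ℚ) * (d : ℚ) from hSq] at hq
    have hkQ : (k : ℚ) ≠ 0 := by exact_mod_cast hk0
    have heq : ((2 - (k : ℚ)) / (k : ℚ) ^ 2) * ((k : ℚ) * d) ^ 2 = (2 - (k : ℚ)) * (d : ℚ) ^ 2 := by
      field_simp
    rw [heq] at hq
    exact_mod_cast hq
  -- T ≤ 2d² - 1
  have hT : ∑ i, x i * (d - x i) ≤ 2 * d ^ 2 - 1 := by
    have hsplit : ∑ i, x i * (d - x i) = d * (∑ i, x i) - ∑ i, (x i) ^ 2 := by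
      rw [Finset.mul_sum, ← Finset.sum_sub_distrib]
      exact Finset.sum_congr rfl (fun i _ => by ring)
    rw [hsplit, hS]
    nlinarith [hqZ]
  -- x i ≥ 1 for i < k
  have hz : ∀ i : Fin n, (i : ℕ) < k → 1 ≤ x i := by
    intro i hi
    by_contra h
    push_neg at h
    have hxi : x i = 0 := le_antisymm (by omega) (hlb i)
    have hzero : ∀ j : Fin n, (i : ℕ) ≤ (j : ℕ) → x j = 0 := by
      intro j hj
      refine le_antisymm ?_ (hlb j)
      calc x j ≤ x i := hmono (by rwa [Fin.le_def])
        _ = 0 := hxi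
    have hsum : ∑ j, x j ≤ ((i : ℕ) : ℤ) * d := by
      rw [← Finset.sum_filter_add_sum_filter_not univ (fun j : Fin n => (j : ℕ) < (i : ℕ))]
      have h2 : ∑ j ∈ univ.filter (fun j : Fin n => ¬ (j : ℕ) < (i : ℕ)), x j = 0 := by
        refine Finset.sum_eq_zero ?_
        intro j hj
        simp only [mem_filter, mem_univ, true_and, not_lt] at hj
        exact hzero j hj
      rw [h2, add_zero]
      calc ∑ j ∈ univ.filter (fun j : Fin n => (j : ℕ) < (i : ℕ)), x j
          ≤ ∑ j ∈ univ.filter (fun j : Fin n => (j : ℕ) < (i : ℕ)), d :=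
            Finset.sum_le_sum (fun j _ => hub j)
        _ = ((i : ℕ) : ℤ) * d := by
            rw [Finset.sum_const, card_filter_val_lt n (i : ℕ) i.isLt]
            simp [nsmul_eq_mul]
    rw [hS] at hsum
    have hik : ((i : ℕ) : ℤ) < (k : ℤ) := by exact_mod_cast hi
    nlinarith
  -- x j ≤ d - 1 for j ≥ k
  have hw : ∀ j : Fin n, k ≤ (j : ℕ) → x j ≤ d - 1 := by
    intro j hj
    by_contra h
    push_neg at h
    have hdj : x j = d := le_antisymm (hub j) (by omega)
    have hall : ∀ i : Fin n, (i : ℕ) ≤ (j : ℕ) → x i = d := by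
      intro i hi
      refine le_antisymm (hub i) ?_
      calc d = x j := hdj.symm
        _ ≤ x i := hmono (by rwa [Fin.le_def])
    have hsum : (((j : ℕ) : ℤ) + 1) * d ≤ ∑ i, x i := by
      rw [← Finset.sum_filter_add_sum_filter_not univ (fun i : Fin n => (i : ℕ) ≤ (j : ℕ))]
      have h1 : ∑ i ∈ univ.filter (fun i : Fin n => (i : ℕ) ≤ (j : ℕ)), x i
          = (((j : ℕ) : ℤ) + 1) * d := by
        rw [Finset.sum_congr rfl (fun i hi => hall i (by simpa using (mem_filter.mp hi).2))]
        rw [Finset.sum_const, card_filter_val_le n j]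
        push_cast [nsmul_eq_mul]
        ring
      have h2 : 0 ≤ ∑ i ∈ univ.filter (fun i : Fin n => ¬ (i : ℕ) ≤ (j : ℕ)), x i :=
        Finset.sum_nonneg (fun i _ => hlb i)
      omega
    rw [hS] at hsum
    have hjk : (k : ℤ) ≤ ((j : ℕ) : ℤ) := by exact_mod_cast hj
    nlinarith
  -- partition
  set P := univ.filter (fun i : Fin n => (i : ℕ) < k) with hP
  set Q := univ.filter (fun i : Fin n => ¬ (i : ℕ) < k) with hQ
  set As := univ.filter (fun i : Fin n => (i : ℕ) < k ∧ x i < d) with hAs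
  set Bs := univ.filter (fun i : Fin n => k ≤ (i : ℕ) ∧ 0 < x i) with hBs
  have hAsub : As ⊆ P := by
    intro i hi
    simp only [hAs, hP, mem_filter, mem_univ, true_and] at hi ⊢
    exact hi.1
  have hBsub : Bs ⊆ Q := by
    intro i hi
    simp only [hBs, hQ, mem_filter, mem_univ, true_and, not_lt] at hi ⊢
    exact hi.1
  have cardP : P.card = k := card_filter_val_lt n k hkn
  have hTsplit : ∑ i ∈ P, x i * (d - x i) + ∑ i ∈ Q, x i * (d - x i) = ∑ i, x i * (d - x i) :=
    Finset.sum_filter_add_sum_filter_not univ _ _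
  have hSsplit : ∑ i ∈ P, x i + ∑ i ∈ Q, x i = (k : ℤ) * d := by
    rw [Finset.sum_filter_add_sum_filter_not univ _ x, hS]
  have hfnonneg : ∀ i : Fin n, 0 ≤ x i * (d - x i) := by
    intro i
    exact mul_nonneg (hlb i) (by linarith [hub i])
  constructor
  · -- first bound
    have h1 : (As.card : ℤ) * d - As.card ≤ ∑ i ∈ P, x i * (d - x i) := by
      calc (As.card : ℤ) * d - As.card = ∑ _i ∈ As, (d - 1) := by
            rw [Finset.sum_const, nsmul_eq_mul]; ring
        _ ≤ ∑ i ∈ As, x i * (d - x i) := by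
            refine Finset.sum_le_sum ?_
            intro i hi
            simp only [hAs, mem_filter, mem_univ, true_and] at hi
            have h1 := hz i hi.1
            have h2 : x i ≤ d - 1 := by omega
            nlinarith
        _ ≤ ∑ i ∈ P, x i * (d - x i) :=
            Finset.sum_le_sum_of_subset_of_nonneg hAsub (fun i _ _ => hfnonneg i)
    have h2 : ∑ i ∈ Q, x i ≤ ∑ i ∈ Q, x i * (d - x i) := by
      refine Finset.sum_le_sum ?_
      intro i hi
      simp only [hQ, mem_filter, mem_univ, true_and, not_lt] at hi
      have := hw i hi
      nlinarith [hlb i]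
    have h4 : ∑ i ∈ P, x i ≤ (k : ℤ) * d - As.card := by
      have hcards : As.card ≤ k := cardP ▸ Finset.card_le_card hAsub
      rw [← Finset.sum_sdiff hAsub]
      have ha : ∑ i ∈ As, x i ≤ (As.card : ℤ) * d - As.card := by
        calc ∑ i ∈ As, x i ≤ ∑ _i ∈ As, (d - 1) := by
              refine Finset.sum_le_sum ?_
              intro i hi
              simp only [hAs, mem_filter, mem_univ, true_and] at hi
              omega
          _ = (As.card : ℤ) * d - As.card := by rw [Finset.sum_const, nsmul_eq_mul]; ring
      have hb : ∑ i ∈ P \ As, x i ≤ (k : ℤ) * d - (As.card : ℤ) * d := by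
        calc ∑ i ∈ P \ As, x i ≤ ∑ _i ∈ P \ As, d := Finset.sum_le_sum (fun i _ => hub i)
          _ = (k : ℤ) * d - (As.card : ℤ) * d := by
              rw [Finset.sum_const, nsmul_eq_mul, Finset.card_sdiff_of_subset hAsub, cardP]
              push_cast [hcards]
              ring
      nlinarith [ha, hb]
    -- combine: A*d ≤ T
    have hAd : (As.card : ℤ) * d ≤ 2 * d ^ 2 - 1 := by
      linarith [hT, hTsplit, hSsplit, h1, h2, h4]
    by_contra hcon
    push_neg at hcon
    have h5 : 2 * d ≤ (As.card : ℤ) := by omega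
    have h6 : 2 * d ^ 2 ≤ (As.card : ℤ) * d := by
      calc 2 * d ^ 2 = 2 * d * d := by ring
        _ ≤ _ := mul_le_mul_of_nonneg_right h5 (by linarith)
    linarith [h6, hAd]
  · -- second bound
    have h1 : (Bs.card : ℤ) * d - Bs.card ≤ ∑ i ∈ Q, x i * (d - x i) := by
      calc (Bs.card : ℤ) * d - Bs.card = ∑ _i ∈ Bs, (d - 1) := by
            rw [Finset.sum_const, nsmul_eq_mul]; ring
        _ ≤ ∑ i ∈ Bs, x i * (d - x i) := by
            refine Finset.sum_le_sum ?_
            intro i hi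
            simp only [hBs, mem_filter, mem_univ, true_and] at hi
            have h1 := hw i hi.1
            have h2 : 1 ≤ x i := hi.2
            nlinarith
        _ ≤ ∑ i ∈ Q, x i * (d - x i) :=
            Finset.sum_le_sum_of_subset_of_nonneg hBsub (fun i _ _ => hfnonneg i)
    have h2 : ∑ i ∈ P, (d - x i) ≤ ∑ i ∈ P, x i * (d - x i) := by
      refine Finset.sum_le_sum ?_
      intro i hi
      simp only [hP, mem_filter, mem_univ, true_and] at hi
      have := hz i hi
      nlinarith [hub i]
    have h3 : (Bs.card : ℤ) ≤ ∑ i ∈ Q, x i := by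
      calc (Bs.card : ℤ) = ∑ _i ∈ Bs, (1 : ℤ) := by rw [Finset.sum_const, nsmul_eq_mul, mul_one]
        _ ≤ ∑ i ∈ Bs, x i := by
            refine Finset.sum_le_sum ?_
            intro i hi
            simp only [hBs, mem_filter, mem_univ, true_and] at hi
            exact hi.2
        _ ≤ ∑ i ∈ Q, x i := Finset.sum_le_sum_of_subset_of_nonneg hBsub (fun i _ _ => hlb i)
    have h4 : ∑ i ∈ P, (d - x i) = (k : ℤ) * d - ∑ i ∈ P, x i := by
      rw [Finset.sum_sub_distrib, Finset.sum_const, nsmul_eq_mul, cardP]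
    have hBd : (Bs.card : ℤ) * d ≤ 2 * d ^ 2 - 1 := by
      linarith [hT, hTsplit, hSsplit, h1, h2, h3, h4]
    by_contra hcon
    push_neg at hcon
    have h5 : 2 * d ≤ (Bs.card : ℤ) := by omega
    have h6 : 2 * d ^ 2 ≤ (Bs.card : ℤ) * d := by
      calc 2 * d ^ 2 = 2 * d * d := by ring
        _ ≤ _ := mul_le_mul_of_nonneg_right h5 (by linarith)
    linarith [h6, hBd]
end

section
/- Let k = 4, n = 10 and x = (3, 3, 3, 1, 1, 1, 1, 1, 1, 1) ∈ ℤ^{10}. Then x lies in the root lattice (4 divides the coordinate sum), deg(x) = 4, all coordinates satisfy 0 ≤ x_i ≤ 4, and q(x) = 2; nevertheless x is NOT a real root: x ∉ W·β. (Thus x is an 'almost real root': conditions (1) and (2) of the real-root criterion do not suffice.) -/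
open Finset

/-- The almost real root `x = (3,3,3,1,1,1,1,1,1,1)` in `J_{4,10}`. -/
def almostRealExample : Fin 10 → ℚ := fun i => if (i : ℕ) < 3 then 3 else 1

namespace AlmostRealAux

lemma sum_univ_ten {M : Type*} [AddCommMonoid M] (f : Fin 10 → M) :
    ∑ i, f i = f 0 + f 1 + f 2 + f 3 + f 4 + f 5 + f 6 + f 7 + f 8 + f 9 := by
  rw [Fin.sum_univ_castSucc, Fin.sum_univ_castSucc, Fin.sum_univ_eight]
  rfl

lemma v0 : ((0:Fin 10):ℕ) = 0 := rfl
lemma v1 : ((1:Fin 10):ℕ) = 1 := rfl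
lemma v2 : ((2:Fin 10):ℕ) = 2 := rfl
lemma v3 : ((3:Fin 10):ℕ) = 3 := rfl
lemma v4 : ((4:Fin 10):ℕ) = 4 := rfl
lemma v5 : ((5:Fin 10):ℕ) = 5 := rfl
lemma v6 : ((6:Fin 10):ℕ) = 6 := rfl
lemma v7 : ((7:Fin 10):ℕ) = 7 := rfl
lemma v8 : ((8:Fin 10):ℕ) = 8 := rfl
lemma v9 : ((9:Fin 10):ℕ) = 9 := rfl

/-- The invariant: integer coordinates, coordinate sum divisible by 4, and
not all coordinates congruent mod 2. -/
def Pinv (x : Fin 10 → ℚ) : Prop :=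
  ∃ a : Fin 10 → ℤ, (∀ i, x i = (a i : ℚ)) ∧ ((4 : ℤ) ∣ ∑ i, a i) ∧
    ∃ i j : Fin 10, ¬ (2 : ℤ) ∣ (a i - a j)

lemma rco_eq (x : Fin 10 → ℚ) :
    rco 10 4 x = x 4 + x 5 + x 6 + x 7 + x 8 + x 9
      - (x 0 + x 1 + x 2 + x 3 + x 4 + x 5 + x 6 + x 7 + x 8 + x 9) / 2 := by
  rw [rco, degv, Finset.sum_filter]
  simp only [sum_univ_ten, v0, v1, v2, v3, v4, v5, v6, v7, v8, v9]
  norm_num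
  ring

lemma sBeta_apply (x : Fin 10 → ℚ) (i : Fin 10) :
    sBeta 10 4 x i = x i + rco 10 4 x * (if (i : ℕ) < 4 then 1 else 0) := by
  simp [sBeta, betaRoot, mul_ite]

lemma rco_sBeta (x : Fin 10 → ℚ) : rco 10 4 (sBeta 10 4 x) = - rco 10 4 x := by
  rw [rco_eq]
  simp only [sBeta_apply, v0, v1, v2, v3, v4, v5, v6, v7, v8, v9]
  rw [rco_eq]
  norm_num
  ring

lemma sBeta_sBeta (x : Fin 10 → ℚ) : sBeta 10 4 (sBeta 10 4 x) = x := by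
  funext i
  rw [sBeta_apply, sBeta_apply x, rco_sBeta]
  ring

lemma sSwap_sSwap (a b : Fin 10) (x : Fin 10 → ℚ) :
    sSwap 10 a b (sSwap 10 a b x) = x := by
  funext i
  simp [sSwap, Equiv.swap_apply_self]

lemma pinv_sSwap (a b : Fin 10) (x : Fin 10 → ℚ) (h : Pinv x) :
    Pinv (sSwap 10 a b x) := by
  obtain ⟨c, hxc, hdvd, i, j, hij⟩ := h
  refine ⟨c ∘ Equiv.swap a b, fun i => hxc _, ?_, Equiv.swap a b i, Equiv.swap a b j, ?_⟩
  · rw [show (∑ i, (c ∘ Equiv.swap a b) i) = ∑ i, c i from Equiv.sum_comp _ c]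
    exact hdvd
  · show ¬ (2:ℤ) ∣ (c (Equiv.swap a b (Equiv.swap a b i)) - c (Equiv.swap a b (Equiv.swap a b j)))
    rwa [Equiv.swap_apply_self, Equiv.swap_apply_self]

lemma pinv_sBeta (x : Fin 10 → ℚ) (h : Pinv x) : Pinv (sBeta 10 4 x) := by
  obtain ⟨a, hxa, ⟨m, hm⟩, i0, j0, hij⟩ := h
  rw [sum_univ_ten] at hm
  set r : ℤ := a 4 + a 5 + a 6 + a 7 + a 8 + a 9 - 2 * m with hrdef
  have hr : rco 10 4 x = (r : ℚ) := by
    rw [rco_eq]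
    simp only [hxa]
    have hS : ((a 0 : ℚ) + a 1 + a 2 + a 3 + a 4 + a 5 + a 6 + a 7 + a 8 + a 9)
        = 4 * (m : ℚ) := by exact_mod_cast hm
    push_cast [hrdef]
    linear_combination (-1/2 : ℚ) * hS
  refine ⟨fun i => a i + r * (if (i : ℕ) < 4 then 1 else 0), fun i => ?_, ?_, ?_⟩
  · show sBeta 10 4 x i = ((a i + r * (if (i : ℕ) < 4 then 1 else 0) : ℤ) : ℚ)
    rw [sBeta_apply, hxa, hr]
    split <;> push_cast <;> ring
  · show (4:ℤ) ∣ ∑ i, (a i + r * (if (i : ℕ) < 4 then 1 else 0))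
    simp only [sum_univ_ten, v0, v1, v2, v3, v4, v5, v6, v7, v8, v9]
    norm_num
    exact ⟨m + r, by linarith [hm]⟩
  · rcases Int.even_or_odd r with hre | hro
    · refine ⟨i0, j0, ?_⟩
      show ¬ (2:ℤ) ∣ (a i0 + r * (if (i0 : ℕ) < 4 then 1 else 0))
          - (a j0 + r * (if (j0 : ℕ) < 4 then 1 else 0))
      intro hd
      apply hij
      obtain ⟨s, hs⟩ := hre
      have h2 : (2:ℤ) ∣ r * ((if (i0 : ℕ) < 4 then 1 else 0) - (if (j0 : ℕ) < 4 then 1 else 0)) :=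
        Dvd.dvd.mul_right ⟨s, by omega⟩ _
      have hsub := dvd_sub hd h2
      have he : a i0 + r * (if (i0 : ℕ) < 4 then 1 else 0)
          - (a j0 + r * (if (j0 : ℕ) < 4 then 1 else 0))
          - r * ((if (i0 : ℕ) < 4 then 1 else 0) - (if (j0 : ℕ) < 4 then 1 else 0))
          = a i0 - a j0 := by ring
      rwa [he] at hsub
    · have hback : ∃ i j : Fin 10, 4 ≤ (i : ℕ) ∧ 4 ≤ (j : ℕ) ∧ ¬ (2:ℤ) ∣ (a i - a j) := by
        by_contra hno
        push_neg at hno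
        have d5 := hno 4 5 (by decide) (by decide)
        have d6 := hno 4 6 (by decide) (by decide)
        have d7 := hno 4 7 (by decide) (by decide)
        have d8 := hno 4 8 (by decide) (by decide)
        have d9 := hno 4 9 (by decide) (by decide)
        obtain ⟨s, hs⟩ := hro
        omega
      obtain ⟨i, j, hi, hj, hd⟩ := hback
      refine ⟨i, j, ?_⟩
      show ¬ (2:ℤ) ∣ (a i + r * (if (i : ℕ) < 4 then 1 else 0))
          - (a j + r * (if (j : ℕ) < 4 then 1 else 0))
      rw [if_neg (by omega), if_neg (by omega)]
      simpa using hd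

lemma weyl_pres : ∀ σ ∈ weyl 10 4, ∀ x, Pinv x ↔ Pinv (σ x) := by
  intro σ hσ
  induction hσ using Subgroup.closure_induction with
  | mem g hg =>
    rcases hg with hb | ⟨a, b, -, hs⟩
    · intro x
      have hgx : g x = sBeta 10 4 x := congrFun hb x
      constructor
      · intro hx
        rw [hgx]
        exact pinv_sBeta x hx
      · intro hx
        have h2 := pinv_sBeta (g x) hx
        rwa [hgx, sBeta_sBeta] at h2
    · intro x
      have hgx : g x = sSwap 10 a b x := congrFun hs x
      constructor
      · intro hx
        rw [hgx]
        exact pinv_sSwap a b x hx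
      · intro hx
        have h2 := pinv_sSwap a b (g x) hx
        rwa [hgx, sSwap_sSwap] at h2
  | one => intro x; simp
  | mul g h _ _ hg hh =>
    intro x
    rw [Equiv.Perm.mul_apply]
    exact (hh x).trans (hg (h x))
  | inv g _ hg =>
    intro x
    have h1 := (hg (g⁻¹ x)).symm
    simpa using h1

lemma pinv_beta : Pinv (betaRoot 10 4) := by
  refine ⟨fun i => if (i : ℕ) < 4 then 1 else 0, fun i => ?_, ?_, 0, 9, ?_⟩
  · show (if (i : ℕ) < 4 then (1:ℚ) else 0) = ((if (i : ℕ) < 4 then (1:ℤ) else 0 : ℤ) : ℚ)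
    split <;> norm_num
  · show (4:ℤ) ∣ ∑ i : Fin 10, (if (i : ℕ) < 4 then (1:ℤ) else 0)
    simp only [sum_univ_ten, v0, v1, v2, v3, v4, v5, v6, v7, v8, v9]
    norm_num
  · show ¬ (2:ℤ) ∣ ((if ((0: Fin 10) : ℕ) < 4 then (1:ℤ) else 0)
      - (if ((9: Fin 10) : ℕ) < 4 then (1:ℤ) else 0))
    decide

lemma not_pinv_almost : ¬ Pinv almostRealExample := by
  rintro ⟨a, hxa, -, i, j, hij⟩
  have hi := hxa i
  have hj := hxa j
  have hvi : a i = 3 ∨ a i = 1 := by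
    by_cases h : (i : ℕ) < 3
    · left
      have h3 : (3:ℚ) = a i := by simpa [almostRealExample, h] using hi
      exact_mod_cast h3.symm
    · right
      have h1 : (1:ℚ) = a i := by simpa [almostRealExample, h] using hi
      exact_mod_cast h1.symm
  have hvj : a j = 3 ∨ a j = 1 := by
    by_cases h : (j : ℕ) < 3
    · left
      have h3 : (3:ℚ) = a j := by simpa [almostRealExample, h] using hj
      exact_mod_cast h3.symm
    · right
      have h1 : (1:ℚ) = a j := by simpa [almostRealExample, h] using hj
      exact_mod_cast h1.symm
  apply hij
  omega

end AlmostRealAux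

theorem almost_real_root_example :
    (∃ m : ℤ, (∑ i, almostRealExample i) = 4 * (m : ℚ)) ∧
    degv 10 4 almostRealExample = 4 ∧
    (∀ i, 0 ≤ almostRealExample i ∧ almostRealExample i ≤ 4) ∧
    qform 10 4 almostRealExample = 2 ∧
    almostRealExample ∉ realRoots 10 4 := by
  have hsum : (∑ i, almostRealExample i) = 16 := by
    simp only [AlmostRealAux.sum_univ_ten, almostRealExample,
      AlmostRealAux.v0, AlmostRealAux.v1, AlmostRealAux.v2, AlmostRealAux.v3,
      AlmostRealAux.v4, AlmostRealAux.v5, AlmostRealAux.v6, AlmostRealAux.v7,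
      AlmostRealAux.v8, AlmostRealAux.v9]
    norm_num
  refine ⟨⟨4, by rw [hsum]; norm_num⟩, ?_, ?_, ?_, ?_⟩
  · rw [degv, hsum]
    norm_num
  · intro i
    unfold almostRealExample
    split <;> norm_num
  · rw [qform, hsum]
    simp only [AlmostRealAux.sum_univ_ten, almostRealExample,
      AlmostRealAux.v0, AlmostRealAux.v1, AlmostRealAux.v2, AlmostRealAux.v3,
      AlmostRealAux.v4, AlmostRealAux.v5, AlmostRealAux.v6, AlmostRealAux.v7,
      AlmostRealAux.v8, AlmostRealAux.v9]
    norm_num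
  · rintro ⟨σ, hσ, hx⟩
    have h := (AlmostRealAux.weyl_pres σ hσ (betaRoot 10 4)).mp AlmostRealAux.pinv_beta
    rw [hx] at h
    exact AlmostRealAux.not_pinv_almost h
end
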